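/- arXiv:1910.03758 — 7 statements merged into one kernel-verified Lean document; each statement's English description precedes it below -/
import Mathlib

section
/- Let f : ℝ → ℝ be continuous, with f(s) = 0 for s ≤ 0 and f strictly increasing on [0, ∞). Suppose there exists δ₀ ∈ (0,1) such that ∫₀ˢ f(r) dr ≤ δ₀ · f(s) · s for all s ≥ 0. Then there exists δ₁ ∈ (0,1) such that F(s) ≥ δ₁ · s · f⁻¹(s) for all s ≥ 0, where f⁻¹ denotes the inverse of f on [0,∞) extended by 0 on (−∞,0], and F(s) = ∫₀ˢ f⁻¹(r) dr. -/
open Set intervalIntegral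

/-- (H2) implies (H2)': if `f` is continuous, vanishes on `(-∞,0]`, is strictly
increasing on `[0,∞)`, and `∫₀ˢ f ≤ δ₀ f(s) s` for all `s ≥ 0` with `δ₀ ∈ (0,1)`,
then there is `δ₁ ∈ (0,1)` with `F(s) ≥ δ₁ s f⁻¹(s)` for all `s ≥ 0`, where
`g = f⁻¹` is the inverse of `f` on `[0,∞)` extended by `0` on `(-∞,0]` and
`F(s) = ∫₀ˢ g`. -/
theorem stmt0 (f g : ℝ → ℝ)
    (hf_cont : Continuous f)
    (hf_neg : ∀ s ≤ (0 : ℝ), f s = 0)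
    (hf_mono : StrictMonoOn f (Ici 0))
    (hg_neg : ∀ s ≤ (0 : ℝ), g s = 0)
    (hg_left : ∀ s ≥ (0 : ℝ), g (f s) = s)
    (hg_right : ∀ s ≥ (0 : ℝ), f (g s) = s)
    (hH2 : ∃ δ₀ ∈ Ioo (0 : ℝ) 1, ∀ s ≥ (0 : ℝ),
      (∫ r in (0 : ℝ)..s, f r) ≤ δ₀ * f s * s) :
    ∃ δ₁ ∈ Ioo (0 : ℝ) 1, ∀ s ≥ (0 : ℝ),
      (∫ r in (0 : ℝ)..s, g r) ≥ δ₁ * s * g s := by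
  classical
  obtain ⟨δ₀, hδ₀, hineq⟩ := hH2
  have hf0 : f 0 = 0 := hf_neg 0 le_rfl
  -- f is nonnegative and monotone on ℝ
  have hfnn : ∀ x : ℝ, 0 ≤ f x := by
    intro x
    by_cases hx : x ≤ 0
    · rw [hf_neg x hx]
    · have h0x : (0:ℝ) ≤ x := le_of_lt (lt_of_not_ge hx)
      have := hf_mono.monotoneOn (le_refl (0:ℝ)) h0x h0x
      rwa [hf0] at this
  have hfmono : Monotone f := by
    intro a b hab
    by_cases hb : b ≤ 0
    · rw [hf_neg a (hab.trans hb), hf_neg b hb]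
    · have hb0 : (0:ℝ) ≤ b := le_of_lt (lt_of_not_ge hb)
      by_cases ha : a ≤ 0
      · rw [hf_neg a ha]; exact hfnn b
      · exact hf_mono.monotoneOn (le_of_lt (lt_of_not_ge ha)) hb0 hab
  -- g is nonnegative and monotone
  have hgnn : ∀ x : ℝ, 0 ≤ g x := by
    intro x
    by_cases hx : x ≤ 0
    · rw [hg_neg x hx]
    · have hx0 : (0:ℝ) ≤ x := le_of_lt (lt_of_not_ge hx)
      by_contra h
      push_neg at h
      have h1 : f (g x) = 0 := hf_neg _ h.le
      rw [hg_right x hx0] at h1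
      exact hx (le_of_eq h1)
  have hgmono : Monotone g := by
    intro a b hab
    by_cases ha : a ≤ 0
    · rw [hg_neg a ha]; exact hgnn b
    · have ha0 : (0:ℝ) ≤ a := le_of_lt (lt_of_not_ge ha)
      have hb0 : (0:ℝ) ≤ b := ha0.trans hab
      have hfab : f (g a) ≤ f (g b) := by
        rw [hg_right a ha0, hg_right b hb0]; exact hab
      exact (hf_mono.le_iff_le (hgnn a) (hgnn b)).mp hfab
  have hgint : ∀ a b : ℝ, IntervalIntegrable g MeasureTheory.volume a b :=
    fun a b => (hgmono.monotoneOn _).intervalIntegrable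
  -- the auxiliary function A
  set A : ℝ → ℝ := fun u => u * f u - ∫ r in (0:ℝ)..f u, g r with hA_def
  have hAneg : ∀ u ≤ (0:ℝ), A u = 0 := by
    intro u hu
    simp [hA_def, hf_neg u hu]
  -- basic bound in the main case 0 ≤ a ≤ b
  have hbd0 : ∀ a b : ℝ, 0 ≤ a → a ≤ b →
      (b - a) * f a ≤ A b - A a ∧ A b - A a ≤ (b - a) * f b := by
    intro a b ha hab
    have hb0 : (0:ℝ) ≤ b := ha.trans hab
    have hfab : f a ≤ f b := hfmono hab
    have hsub : (∫ r in (0:ℝ)..f b, g r) - (∫ r in (0:ℝ)..f a, g r)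
        = ∫ r in (f a)..(f b), g r :=
      intervalIntegral.integral_interval_sub_left (hgint 0 (f b)) (hgint 0 (f a))
    have hup : (∫ r in (f a)..(f b), g r) ≤ (f b - f a) * b := by
      have h1 : (∫ r in (f a)..(f b), g r) ≤ ∫ _ in (f a)..(f b), b := by
        apply intervalIntegral.integral_mono_on hfab (hgint _ _) intervalIntegrable_const
        intro x hx
        have h2 : g x ≤ g (f b) := hgmono hx.2
        rwa [hg_left b hb0] at h2
      simpa [smul_eq_mul, mul_comm] using h1
    have hlo : (f b - f a) * a ≤ ∫ r in (f a)..(f b), g r := by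
      have h1 : (∫ _ in (f a)..(f b), a) ≤ ∫ r in (f a)..(f b), g r := by
        apply intervalIntegral.integral_mono_on hfab intervalIntegrable_const (hgint _ _)
        intro x hx
        have h2 : g (f a) ≤ g x := hgmono hx.1
        rwa [hg_left a ha] at h2
      simpa [smul_eq_mul, mul_comm] using h1
    have hAe : A b - A a = b * f b - a * f a - ∫ r in (f a)..(f b), g r := by
      simp only [hA_def]
      linarith [hsub]
    constructor <;> nlinarith [hup, hlo, hAe]
  -- extended bound for all a ≤ b
  have hbd : ∀ a b : ℝ, a ≤ b →
      (b - a) * f a ≤ A b - A a ∧ A b - A a ≤ (b - a) * f b := by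
    intro a b hab
    by_cases hb : b ≤ 0
    · rw [hAneg a (hab.trans hb), hAneg b hb, hf_neg a (hab.trans hb), hf_neg b hb]
      simp
    · have hb0 : (0:ℝ) ≤ b := le_of_lt (lt_of_not_ge hb)
      by_cases ha : 0 ≤ a
      · exact hbd0 a b ha hab
      · have ha0 : a ≤ 0 := le_of_lt (lt_of_not_ge ha)
        have h0 := hbd0 0 b le_rfl hb0
        rw [hAneg 0 le_rfl, hf0] at h0
        rw [hAneg a ha0, hf_neg a ha0]
        have hfb : 0 ≤ f b := hfnn b
        constructor
        · nlinarith [h0.1]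
        · nlinarith [h0.2]
  -- A has derivative f everywhere
  have hA : ∀ x : ℝ, HasDerivAt A (f x) x := by
    intro x
    rw [hasDerivAt_iff_tendsto_slope]
    have hbound : ∀ u ∈ ({x}ᶜ : Set ℝ), |slope A x u - f x| ≤ |f u - f x| := by
      intro u hu
      have hne : u ≠ x := hu
      rcases lt_or_gt_of_ne hne with h | h
      · -- u < x
        have hb := hbd u x h.le
        have hpos : (0:ℝ) < x - u := by linarith
        rw [slope_comm, slope_def_field]
        have h1 : f u ≤ (A x - A u) / (x - u) := (le_div_iff₀ hpos).mpr (by linarith [hb.1])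
        have h2 : (A x - A u) / (x - u) ≤ f x := (div_le_iff₀ hpos).mpr (by linarith [hb.2])
        have h3 : f x - f u ≤ |f u - f x| := by
          rw [abs_sub_comm]; exact le_abs_self _
        rw [abs_le]
        constructor <;> [linarith [h1, h3]; linarith [h2, abs_nonneg (f u - f x)]]
      · -- x < u
        have hb := hbd x u h.le
        have hpos : (0:ℝ) < u - x := by linarith
        rw [slope_def_field]
        have h1 : f x ≤ (A u - A x) / (u - x) := (le_div_iff₀ hpos).mpr (by linarith [hb.1])
        have h2 : (A u - A x) / (u - x) ≤ f u := (div_le_iff₀ hpos).mpr (by linarith [hb.2])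
        have h3 : f u - f x ≤ |f u - f x| := le_abs_self _
        rw [abs_le]
        constructor <;> [linarith [h1, abs_nonneg (f u - f x)]; linarith [h2, h3]]
    have h0 : Filter.Tendsto (fun u => |f u - f x|) (nhdsWithin x ({x}ᶜ : Set ℝ)) (nhds 0) := by
      have h1 : Filter.Tendsto (fun u => |f u - f x|) (nhds x) (nhds |f x - f x|) :=
        ((hf_cont.tendsto x).sub tendsto_const_nhds).abs
      simpa using h1.mono_left nhdsWithin_le_nhds
    rw [tendsto_iff_norm_sub_tendsto_zero]
    apply squeeze_zero' (Filter.Eventually.of_forall (fun u => norm_nonneg _))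
      (eventually_nhdsWithin_of_forall (fun u hu => ?_)) h0
    simpa [Real.norm_eq_abs] using hbound u hu
  -- Young's identity for t ≥ 0
  have key : ∀ t : ℝ, 0 ≤ t →
      (∫ r in (0:ℝ)..f t, g r) = t * f t - ∫ r in (0:ℝ)..t, f r := by
    intro t ht
    have hftc : (∫ r in (0:ℝ)..t, f r) = A t - A 0 :=
      intervalIntegral.integral_eq_sub_of_hasDerivAt
        (fun x _ => hA x) (hf_cont.intervalIntegrable 0 t)
    rw [hAneg 0 le_rfl, sub_zero] at hftc
    simp only [hA_def] at hftc
    linarith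
  -- conclude
  refine ⟨1 - δ₀, ⟨by linarith [hδ₀.2], by linarith [hδ₀.1]⟩, ?_⟩
  intro s hs
  have ht : 0 ≤ g s := hgnn s
  have hft : f (g s) = s := hg_right s hs
  have hkey := key (g s) ht
  rw [hft] at hkey
  have h2 := hineq (g s) ht
  rw [hft] at h2
  rw [ge_iff_le, hkey]
  nlinarith [h2]
end

section
/- Let f : ℝ → ℝ be continuous, f(s) = 0 for s ≤ 0, f strictly increasing on [0,∞), and suppose there exists δ₀ ∈ (0,1) with ∫₀ˢ f(r) dr ≤ δ₀ f(s) s for all s ≥ 0. Then f(s) → +∞ as s → +∞. -/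
open Set Filter

/-- (H1)+(H2) imply `f(s) → +∞` as `s → +∞`. -/
theorem stmt1 (f : ℝ → ℝ)
    (hf_cont : Continuous f)
    (hf_neg : ∀ s ≤ (0 : ℝ), f s = 0)
    (hf_mono : StrictMonoOn f (Ici 0))
    (hH2 : ∃ δ₀ ∈ Ioo (0 : ℝ) 1, ∀ s ≥ (0 : ℝ),
      (∫ r in (0 : ℝ)..s, f r) ≤ δ₀ * f s * s) :
    Tendsto f atTop atTop := by
  obtain ⟨δ₀, ⟨hδ0, hδ1⟩, hH2⟩ := hH2
  have hf0 : f 0 = 0 := hf_neg 0 le_rfl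
  have hmono : Monotone f := by
    intro x y hxy
    rcases le_or_gt y 0 with hy | hy
    · rw [hf_neg x (hxy.trans hy), hf_neg y hy]
    rcases le_or_gt x 0 with hx | hx
    · rw [hf_neg x hx, ← hf0]
      exact (hf_mono (le_refl (0:ℝ) : (0:ℝ) ∈ Ici (0:ℝ)) hy.le hy).le
    · exact hf_mono.monotoneOn hx.le (hx.le.trans hxy) hxy
  have hnn : ∀ r, 0 ≤ f r := by
    intro r
    rcases le_or_gt r 0 with hr | hr
    · rw [hf_neg r hr]
    · rw [← hf0]; exact hmono hr.le
  have h1 : 0 < f 1 := by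
    rw [← hf0]; exact hf_mono (le_refl (0:ℝ)) (Set.mem_Ici.mpr zero_le_one) one_pos
  apply tendsto_atTop_atTop_of_monotone hmono
  by_contra hb
  push_neg at hb
  obtain ⟨b, hbb⟩ := hb
  have hbdd : BddAbove (range f) := ⟨b, by rintro _ ⟨a, rfl⟩; exact (hbb a).le⟩
  set L := ⨆ a, f a with hL
  have hLle : ∀ a, f a ≤ L := fun a => le_ciSup hbdd a
  have hLpos : 0 < L := lt_of_lt_of_le h1 (hLle 1)
  -- key: for a ≥ 0, f a ≤ δ₀ * L
  have key : ∀ a ≥ (0:ℝ), f a ≤ δ₀ * L := by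
    intro a ha
    have hineq : ∀ s, a ≤ s → f a * (s - a) ≤ δ₀ * L * s := by
      intro s hs
      have hs0 : (0:ℝ) ≤ s := ha.trans hs
      have hint1 : f a * (s - a) = ∫ _ in a..s, f a := by
        rw [intervalIntegral.integral_const, smul_eq_mul, mul_comm]
      have hintle : (∫ _ in a..s, f a) ≤ ∫ r in a..s, f r := by
        apply intervalIntegral.integral_mono_on hs
          intervalIntegrable_const (hf_cont.intervalIntegrable a s)
        intro x hx
        exact hmono hx.1
      have hsplit : (∫ r in a..s, f r) ≤ ∫ r in (0:ℝ)..s, f r := by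
        rw [← intervalIntegral.integral_add_adjacent_intervals
          (hf_cont.intervalIntegrable 0 a) (hf_cont.intervalIntegrable a s)]
        have : (0:ℝ) ≤ ∫ r in (0:ℝ)..a, f r := by
          apply intervalIntegral.integral_nonneg ha
          intro x _; exact hnn x
        linarith
      have h2 : (∫ r in (0:ℝ)..s, f r) ≤ δ₀ * f s * s := hH2 s hs0
      have h3 : δ₀ * f s * s ≤ δ₀ * L * s :=
        mul_le_mul_of_nonneg_right (mul_le_mul_of_nonneg_left (hLle s) hδ0.le) hs0
      linarith [hint1 ▸ hintle]
    -- take s → ∞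
    have htend : Tendsto (fun s : ℝ => f a * (1 - a * s⁻¹)) atTop (nhds (f a)) := by
      have : Tendsto (fun s : ℝ => f a * (1 - a * s⁻¹)) atTop
          (nhds (f a * (1 - a * 0))) := by
        apply Tendsto.const_mul
        exact (tendsto_const_nhds.sub (tendsto_inv_atTop_zero.const_mul a))
      simpa using this
    have hev : ∀ᶠ s in atTop, f a * (1 - a * s⁻¹) ≤ δ₀ * L := by
      filter_upwards [eventually_ge_atTop (max a 1)] with s hs
      have hsa : a ≤ s := (le_max_left a 1).trans hs
      have hspos : (0:ℝ) < s := lt_of_lt_of_le one_pos ((le_max_right a 1).trans hs)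
      have := hineq s hsa
      have heq : f a * (1 - a * s⁻¹) = f a * (s - a) / s := by
        field_simp
      rw [heq, div_le_iff₀ hspos]
      linarith
    exact le_of_tendsto htend hev
  have : L ≤ δ₀ * L := by
    apply ciSup_le
    intro a
    rcases le_or_gt a 0 with ha | ha
    · rw [hf_neg a ha]; positivity
    · exact key a ha.le
  nlinarith
end

section
/- Let f : ℝ → ℝ be continuous, strictly increasing on [0,∞) with f(0)=0 and f(s) → ∞ as s → ∞. If for every τ > 0 one has f(s)·e^{−τs} → 0 as s → +∞, then for every τ > 0 one has τ·f⁻¹(s) − ln s → +∞ as s → +∞, where f⁻¹ is the inverse of f on [0,∞). -/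
open Set Filter Real

/-- (H3) implies `τ f⁻¹(s) - ln s → +∞` as `s → +∞`, for every `τ > 0`. Here
`g = f⁻¹` is the inverse on `[0,∞)` of the continuous strictly increasing
function `f` with `f(0) = 0` and `f(s) → ∞`. -/
theorem stmt2 (f g : ℝ → ℝ)
    (hf_cont : Continuous f)
    (hf_mono : StrictMonoOn f (Ici 0))
    (hf0 : f 0 = 0)
    (hf_top : Tendsto f atTop atTop)
    (hg_nonneg : ∀ s ≥ (0 : ℝ), g s ≥ 0)
    (hg_left : ∀ s ≥ (0 : ℝ), g (f s) = s)
    (hg_right : ∀ s ≥ (0 : ℝ), f (g s) = s)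
    (hH3 : ∀ τ > (0 : ℝ), Tendsto (fun s => f s * Real.exp (-τ * s)) atTop (nhds 0)) :
    ∀ τ > (0 : ℝ), Tendsto (fun s => τ * g s - Real.log s) atTop atTop := by
  intro τ hτ
  -- g tends to atTop
  have hg_top : Tendsto g atTop atTop := by
    rw [tendsto_atTop]
    intro M
    filter_upwards [eventually_ge_atTop (max (f (max M 0)) 0)] with t ht
    have ht0 : (0:ℝ) ≤ t := le_trans (le_max_right _ _) ht
    have hM0 : (0:ℝ) ≤ max M 0 := le_max_right _ _
    by_contra h
    push_neg at h
    have hgM : g t < max M 0 := lt_of_lt_of_le h (le_max_left _ _)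
    have := hf_mono (hg_nonneg t ht0) hM0 hgM
    rw [hg_right t ht0] at this
    exact absurd (le_trans (le_max_left _ _) ht) (not_le.2 this)
  have h2 : (0:ℝ) < τ/2 := by linarith
  have hfev : ∀ᶠ s in atTop, f s * Real.exp (-(τ/2) * s) < 1 :=
    (hH3 (τ/2) h2).eventually_lt_const one_pos
  obtain ⟨S, hS⟩ := eventually_atTop.mp hfev
  have hmain : ∀ᶠ t in atTop, τ/2 * g t ≤ τ * g t - Real.log t := by
    filter_upwards [hg_top.eventually_ge_atTop S, eventually_ge_atTop (1:ℝ)]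
      with t hgt ht1
    have ht0 : (0:ℝ) ≤ t := le_trans zero_le_one ht1
    have hkey := hS (g t) hgt
    rw [hg_right t ht0] at hkey
    have hexp : (0:ℝ) < Real.exp (-(τ/2) * g t) := Real.exp_pos _
    have htlt : t < Real.exp (τ/2 * g t) := by
      have : t < 1 / Real.exp (-(τ/2) * g t) := by
        rw [lt_div_iff₀ hexp]; exact hkey
      rw [one_div, ← Real.exp_neg] at this
      convert this using 2
      ring
    have hlog : Real.log t < τ/2 * g t :=
      by
      have := Real.log_lt_log (lt_of_lt_of_le zero_lt_one ht1) htlt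
      rwa [Real.log_exp] at this
    linarith
  exact tendsto_atTop_mono' atTop hmain (hg_top.const_mul_atTop h2)
end

section
/- (Upper energy bound via rearrangement) Let D ⊂ ℝ² be bounded, ε > 0, Λ ≥ 1, κ > 0 fixed. Then there exists C > 0 independent of ε such that for all ω ∈ A_{ε} = {ω ∈ L^∞(D) : 0 ≤ ω ≤ Λ/ε², ∫_D ω = κ}, ∫_D∫_D ln(1/|x−y|) ω(x)ω(y) dxdy ≤ κ² ln(1/ε) + C. -/
open Set Filter MeasureTheory Real Metric
open scoped ENNReal NNReal

noncomputable section EnergyAux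

local notation "dim" => Module.finrank ℝ
local notation "E2" => EuclideanSpace ℝ (Fin 2)

lemma lintegral_fun_norm_polar {E : Type*} [NormedAddCommGroup E] [NormedSpace ℝ E]
    [MeasurableSpace E] [BorelSpace E] [FiniteDimensional ℝ E] [Nontrivial E]
    (μ : Measure E) [μ.IsAddHaarMeasure] (f : ℝ → ℝ≥0∞) (hf : Measurable f) :
    ∫⁻ x, f ‖x‖ ∂μ = (dim E) * μ (ball 0 1) *
      ∫⁻ y in Ioi (0:ℝ), ENNReal.ofReal (y ^ (dim E - 1)) * f y := by
  calc ∫⁻ x, f ‖x‖ ∂μ = ∫⁻ x in {(0:E)}ᶜ, f ‖x‖ ∂μ := by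
        rw [MeasureTheory.restrict_compl_singleton]
    _ = ∫⁻ x : ({(0:E)}ᶜ : Set E), f ‖x.1‖ ∂(μ.comap (↑)) :=
        (lintegral_subtype_comap (measurableSet_singleton _).compl fun x ↦ f ‖x‖).symm
    _ = ∫⁻ p : Metric.sphere (0:E) 1 × Ioi (0:ℝ), f p.2
          ∂(μ.toSphere.prod (Measure.volumeIoiPow (dim E - 1))) := by
        rw [← (μ.measurePreserving_homeomorphUnitSphereProd).lintegral_comp_emb
          (Homeomorph.measurableEmbedding _) (fun p => f p.2)]
        exact lintegral_congr fun x => by simp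
    _ = μ.toSphere univ * ∫⁻ y : Ioi (0:ℝ), f y ∂(Measure.volumeIoiPow (dim E - 1)) := by
        rw [MeasureTheory.lintegral_prod (fun p : Metric.sphere (0:E) 1 × Ioi (0:ℝ) => f p.2)
          (((hf.comp measurable_subtype_coe).comp measurable_snd).aemeasurable)]
        simp [lintegral_const, mul_comm]
    _ = _ := by
        rw [Measure.volumeIoiPow]
        rw [lintegral_withDensity_eq_lintegral_mul (Measure.comap Subtype.val volume)
          (f := fun r : Ioi (0:ℝ) => ENNReal.ofReal (r.1 ^ (dim E - 1)))
          ((measurable_subtype_coe.pow_const _).ennreal_ofReal)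
          (g := fun y : Ioi (0:ℝ) => f y.1) (hf.comp measurable_subtype_coe)]
        rw [Measure.toSphere_apply_univ]
        rw [← lintegral_subtype_comap measurableSet_Ioi
          (fun y => ENNReal.ofReal (y ^ (dim E - 1)) * f y)]
        have h0 : (∫⁻ a : Ioi (0:ℝ), ((fun r : Ioi (0:ℝ) => ENNReal.ofReal (r.1 ^ (dim E - 1)))
              * fun y : Ioi (0:ℝ) => f y.1) a ∂(Measure.comap Subtype.val volume))
            = ∫⁻ x : Ioi (0:ℝ), ENNReal.ofReal (x.1 ^ (dim E - 1)) * f x.1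
              ∂(Measure.comap Subtype.val volume) := rfl
        rw [h0, mul_assoc]

lemma vol_ball_E2 (x : E2) (r : ℝ) (hr : 0 ≤ r) :
    volume (ball x r) = ENNReal.ofReal (π * r ^ 2) := by
  rw [EuclideanSpace.volume_ball]
  have h2 : ((Fintype.card (Fin 2) : ℝ) / 2 + 1) = 2 := by
    simp; norm_num
  rw [h2]
  simp only [Fintype.card_fin]
  rw [Real.Gamma_two, sq_sqrt pi_nonneg]
  rw [← ENNReal.ofReal_pow hr, ← ENNReal.ofReal_mul (by positivity)]
  ring_nf

lemma vol_ball_E2_toReal (x : E2) (r : ℝ) (hr : 0 ≤ r) :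
    (volume (ball x r)).toReal = π * r ^ 2 := by
  rw [vol_ball_E2 x r hr]
  exact ENNReal.toReal_ofReal (by positivity)

lemma integrable_fun_norm_E2 {g : ℝ → ℝ} (hg : Measurable g)
    (h : ∫⁻ y in Ioi (0:ℝ), ENNReal.ofReal y * ‖g y‖₊ ≠ ⊤) :
    Integrable (fun z : E2 => g ‖z‖) := by
  refine ⟨(hg.comp measurable_norm).aestronglyMeasurable, ?_⟩
  rw [HasFiniteIntegral]
  have := lintegral_fun_norm_polar (volume : Measure E2)
    (fun t => (‖g t‖₊ : ℝ≥0∞)) (hg.nnnorm.coe_nnreal_ennreal)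
  simp only [enorm_eq_nnnorm]
  rw [this]
  have hd : dim (EuclideanSpace ℝ (Fin 2)) = 2 := by simp
  rw [hd]
  refine ENNReal.mul_lt_top (ENNReal.mul_lt_top (by simp) measure_ball_lt_top) ?_
  rw [lt_top_iff_ne_top]
  simpa using h

lemma integrableOn_inv_norm_E2 (s : ℝ) :
    IntegrableOn (fun z : E2 => ‖z‖⁻¹) (ball 0 s) := by
  rw [← integrable_indicator_iff measurableSet_ball]
  have h0 : (ball (0:E2) s).indicator (fun z => ‖z‖⁻¹)
      = fun z : E2 => (fun t : ℝ => if t < s then t⁻¹ else 0) ‖z‖ := by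
    funext z
    simp [Set.indicator, mem_ball_zero_iff]
  rw [h0]
  refine integrable_fun_norm_E2 (g := fun t : ℝ => if t < s then t⁻¹ else 0) ?_ ?_
  · exact Measurable.ite (measurableSet_lt measurable_id measurable_const)
      measurable_inv measurable_const
  · have hb : (∫⁻ y in Ioi (0:ℝ), ENNReal.ofReal y * ‖if y < s then y⁻¹ else 0‖₊)
        ≤ ∫⁻ y in Ioi (0:ℝ), (Iio s).indicator (fun _ => 1) y := by
      refine lintegral_mono_ae ?_
      filter_upwards [ae_restrict_mem measurableSet_Ioi] with y hy
      rcases lt_or_ge y s with hys | hys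
      · simp only [if_pos hys, indicator_of_mem (mem_Iio.2 hys)]
        rw [← enorm_eq_nnnorm, Real.enorm_eq_ofReal (inv_nonneg.2 (le_of_lt hy)), ← ENNReal.ofReal_mul (le_of_lt hy)]
        rw [mul_inv_cancel₀ (ne_of_gt hy)]
        simp
      · simp [if_neg (not_lt.2 hys), indicator_of_notMem (not_lt.2 hys : ¬ y < s)]
    refine ne_top_of_le_ne_top ?_ hb
    rw [lintegral_indicator measurableSet_Iio, Measure.restrict_restrict measurableSet_Iio]
    rw [Set.Iio_inter_Ioi]
    simp [Real.volume_Ioo]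

lemma integrableOn_log_norm_E2 (s : ℝ) :
    IntegrableOn (fun z : E2 => Real.log ‖z‖) (ball 0 s) := by
  refine Integrable.mono' (g := fun z : E2 => ‖z‖⁻¹ + max (Real.log s) 0)
    ((integrableOn_inv_norm_E2 s).add
      (integrableOn_const measure_ball_lt_top.ne)) ?_ ?_
  · exact (Real.measurable_log.comp measurable_norm).aestronglyMeasurable
  · filter_upwards [ae_restrict_mem measurableSet_ball] with z hz
    rw [mem_ball_zero_iff] at hz
    rw [Real.norm_eq_abs]
    have hmax : (0:ℝ) ≤ max (Real.log s) 0 := le_max_right _ _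
    rcases eq_or_lt_of_le (norm_nonneg z) with h0 | h0
    · rw [← h0]
      simp [Real.log_zero, hmax]
    · rcases le_or_gt ‖z‖ 1 with h1 | h1
      · have habs : |Real.log ‖z‖| = -Real.log ‖z‖ :=
          abs_of_nonpos (Real.log_nonpos h0.le h1)
        have hle : -Real.log ‖z‖ ≤ ‖z‖⁻¹ := by
          have := Real.log_le_sub_one_of_pos (inv_pos.2 h0)
          rw [Real.log_inv] at this
          linarith
        rw [habs]; linarith
      · have habs : |Real.log ‖z‖| = Real.log ‖z‖ :=
          abs_of_nonneg (Real.log_nonneg h1.le)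
        have hle : Real.log ‖z‖ ≤ Real.log s := Real.log_le_log h0 hz.le
        have h2 : (0:ℝ) ≤ ‖z‖⁻¹ := inv_nonneg.2 (norm_nonneg z)
        rw [habs]
        calc Real.log ‖z‖ ≤ max (Real.log s) 0 := le_trans hle (le_max_left _ _)
          _ ≤ ‖z‖⁻¹ + max (Real.log s) 0 := by linarith

lemma setIntegral_inv_norm_E2 {r : ℝ} (hr : 0 < r) :
    ∫ z in ball (0:E2) r, ‖z‖⁻¹ = 2 * π * r := by
  rw [← integral_indicator measurableSet_ball]
  have h0 : (ball (0:E2) r).indicator (fun z => ‖z‖⁻¹)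
      = fun z : E2 => (fun t : ℝ => if t < r then t⁻¹ else 0) ‖z‖ := by
    funext z
    simp [Set.indicator, mem_ball_zero_iff]
  rw [h0, MeasureTheory.integral_fun_norm_addHaar volume (fun t : ℝ => if t < r then t⁻¹ else 0)]
  have hd : Module.finrank ℝ (EuclideanSpace ℝ (Fin 2)) = 2 := by simp
  rw [hd]
  have hball : (volume (ball (0:E2) 1)).toReal = π := by
    rw [vol_ball_E2 _ _ zero_le_one]
    simp [ENNReal.toReal_ofReal pi_nonneg]
  rw [measureReal_def, hball]
  have hint : (∫ y in Ioi (0:ℝ), y ^ (2-1 : ℕ) • (if y < r then y⁻¹ else 0)) = r := by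
    rw [setIntegral_congr_fun measurableSet_Ioi
      (g := fun y => (Iio r).indicator (fun _ => (1:ℝ)) y) ?_]
    · rw [integral_indicator measurableSet_Iio,
        Measure.restrict_restrict measurableSet_Iio, Set.Iio_inter_Ioi]
      simp [Real.volume_Ioo, hr.le]
    · intro y hy
      rcases lt_or_ge y r with hyr | hyr
      · simp only [if_pos hyr, indicator_of_mem (mem_Iio.2 hyr)]
        have : y ≠ 0 := ne_of_gt hy
        simp [pow_one, smul_eq_mul, mul_inv_cancel₀ this]
      · have h1 : y ∉ Iio r := by simpa using hyr
        simp [if_neg (not_lt.2 hyr), Set.indicator_of_notMem h1]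
  rw [hint]
  simp [nsmul_eq_mul, smul_eq_mul]
  ring

lemma setIntegral_dist_transfer (x : E2) (s : ℝ) (G : ℝ → ℝ) :
    ∫ y in ball x s, G (dist x y) = ∫ z in ball (0:E2) s, G ‖z‖ := by
  have hT : MeasurePreserving (fun z : E2 => z + x) volume volume :=
    measurePreserving_add_right volume x
  have hemb : MeasurableEmbedding (fun z : E2 => z + x) :=
    (Homeomorph.addRight x).measurableEmbedding
  have hpre : (fun z : E2 => z + x) ⁻¹' (ball x s) = ball (0:E2) s := by
    ext z
    simp [mem_ball, dist_eq_norm, add_sub_cancel_right, mem_ball_zero_iff]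
  have h := hT.setIntegral_preimage_emb hemb (fun y => G (dist x y)) (ball x s)
  rw [← h, hpre]
  refine setIntegral_congr_fun measurableSet_ball fun z hz => ?_
  rw [dist_comm, dist_eq_norm, add_sub_cancel_right]

lemma integrableOn_dist_transfer (x : E2) (s : ℝ) (G : ℝ → ℝ)
    (h : IntegrableOn (fun z : E2 => G ‖z‖) (ball 0 s)) :
    IntegrableOn (fun y => G (dist x y)) (ball x s) := by
  rw [← integrable_indicator_iff measurableSet_ball] at h ⊢
  have hT : MeasurePreserving (fun z : E2 => z + x) volume volume :=
    measurePreserving_add_right volume x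
  have hemb : MeasurableEmbedding (fun z : E2 => z + x) :=
    (Homeomorph.addRight x).measurableEmbedding
  rw [← hT.integrable_comp_emb hemb]
  have heq : (((ball x s).indicator fun y => G (dist x y)) ∘ (fun z : E2 => z + x))
      = (ball (0:E2) s).indicator (fun z => G ‖z‖) := by
    funext z
    simp only [Function.comp_apply, Set.indicator]
    have hmem : z + x ∈ ball x s ↔ z ∈ ball (0:E2) s := by
      simp [mem_ball, dist_eq_norm, add_sub_cancel_right, mem_ball_zero_iff]
    by_cases hz : z ∈ ball (0:E2) s
    · rw [if_pos (hmem.2 hz), if_pos hz, dist_comm, dist_eq_norm, add_sub_cancel_right]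
    · rw [if_neg (fun hc => hz (hmem.1 hc)), if_neg hz]
  rw [heq]
  exact h

lemma integrableOn_log_dist (x : E2) (s : ℝ) :
    IntegrableOn (fun y : E2 => Real.log (1 / dist x y)) (ball x s) := by
  refine integrableOn_dist_transfer x s (fun t => Real.log (1/t)) ?_
  have h1 : (fun z : E2 => Real.log (1/‖z‖)) = fun z : E2 => -Real.log ‖z‖ := by
    funext z; rw [one_div, Real.log_inv]
  rw [h1]
  exact (integrableOn_log_norm_E2 s).neg

lemma setIntegral_inv_dist (x : E2) {r : ℝ} (hr : 0 < r) :
    ∫ y in ball x r, (dist x y)⁻¹ = 2 * π * r := by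
  have := setIntegral_dist_transfer x r (fun t => t⁻¹)
  rw [this, setIntegral_inv_norm_E2 hr]

/-- The bathtub-principle bound for the inner integral. -/
lemma bathtub_bound (D : Set E2) (hD : MeasurableSet D) (x : E2) (R : ℝ)
    (hDR : D ⊆ ball x R)
    (ω : E2 → ℝ) (hω : Measurable ω) (M : ℝ) (hM : 0 < M)
    (hb : ∀ᵐ y ∂(volume.restrict D), 0 ≤ ω y ∧ ω y ≤ M)
    (r : ℝ) (hr : 0 < r) (κ : ℝ)
    (hκint : ∫ y in D, ω y = κ)
    (hκ : M * (π * r ^ 2) = κ) :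
    ∫ y in D, Real.log (1 / dist x y) * ω y ≤ κ * Real.log (1/r) + 2 * κ := by
  set f : E2 → ℝ := fun y => Real.log (1 / dist x y) with hf
  set L : ℝ := Real.log (1/r) with hL
  have hπr2 : (volume (ball x r)).toReal = π * r ^ 2 := vol_ball_E2_toReal x r hr.le
  have hdm : Measurable (fun y : E2 => dist x y) :=
    (continuous_const.dist continuous_id).measurable
  have hfm : Measurable f := Real.measurable_log.comp (measurable_const.div hdm)
  have hIf : ∀ s : ℝ, IntegrableOn f (ball x s) := fun s => integrableOn_log_dist x s
  have hIfD : IntegrableOn f D := (hIf R).mono_set hDR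
  have hvolD : volume D < ⊤ := lt_of_le_of_lt (measure_mono hDR) measure_ball_lt_top
  have hfω : IntegrableOn (fun y => f y * ω y) D := by
    refine Integrable.mono' (g := fun y => M * |f y|) (hIfD.abs.const_mul M)
      ((hfm.mul hω).aestronglyMeasurable) ?_
    filter_upwards [hb] with y hy
    rw [Real.norm_eq_abs, abs_mul]
    have h1 : |ω y| ≤ M := by rw [abs_of_nonneg hy.1]; exact hy.2
    calc |f y| * |ω y| ≤ |f y| * M := mul_le_mul_of_nonneg_left h1 (abs_nonneg _)
      _ = M * |f y| := mul_comm _ _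
  have hωD : IntegrableOn ω D := by
    refine Integrable.mono' (g := fun _ => M)
      (integrableOn_const hvolD.ne) hω.aestronglyMeasurable ?_
    filter_upwards [hb] with y hy
    rw [Real.norm_eq_abs, abs_of_nonneg hy.1]; exact hy.2
  -- the excess function
  set g : E2 → ℝ := fun y => max (f y - L) 0 with hg
  have hgm : Measurable g := (hfm.sub measurable_const).max measurable_const
  have hg_nonneg : ∀ y, 0 ≤ g y := fun y => le_max_right _ _
  have hg_int : ∀ (S : Set E2), IntegrableOn f S → volume S < ⊤ → IntegrableOn g S := by
    intro S hfS hvS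
    refine Integrable.mono' (g := fun y => |f y| + |L|)
      (hfS.abs.add (integrableOn_const hvS.ne)) hgm.aestronglyMeasurable ?_
    refine Eventually.of_forall fun y => ?_
    rw [Real.norm_eq_abs]
    calc |g y| = g y := abs_of_nonneg (hg_nonneg y)
      _ ≤ |f y - L| := max_le (le_abs_self _) (abs_nonneg _)
      _ ≤ |f y| + |L| := by
          rw [sub_eq_add_neg]
          exact (abs_add_le _ _).trans (by rw [abs_neg])
  have hgD : IntegrableOn g D := hg_int D hIfD hvolD
  have hgB : IntegrableOn g (ball x r) := hg_int _ (hIf r) measure_ball_lt_top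
  -- Step B : pointwise bound and integration over D
  have hpt : ∀ᵐ y ∂(volume.restrict D), f y * ω y ≤ L * ω y + M * g y := by
    filter_upwards [hb] with y hy
    have h1 : f y * ω y = L * ω y + (f y - L) * ω y := by ring
    have h2 : (f y - L) * ω y ≤ g y * ω y :=
      mul_le_mul_of_nonneg_right (le_max_left _ _) hy.1
    have h3 : g y * ω y ≤ g y * M := mul_le_mul_of_nonneg_left hy.2 (hg_nonneg y)
    have h4 : g y * M = M * g y := mul_comm _ _
    linarith
  have hstepB : ∫ y in D, f y * ω y ≤ L * κ + M * ∫ y in D, g y := by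
    have h := integral_mono_ae hfω ((hωD.const_mul L).add (hgD.const_mul M)) hpt
    simp only [Pi.add_apply] at h
    rw [integral_add (hωD.const_mul L) (hgD.const_mul M),
      integral_const_mul, integral_const_mul, hκint] at h
    exact h
  -- Step C : the excess vanishes off the ball
  have hg0 : ∀ y, y ∉ ball x r → g y = 0 := by
    intro y hy
    rw [mem_ball, not_lt] at hy
    have hd : 0 < dist y x := lt_of_lt_of_le hr hy
    have hd' : 0 < dist x y := by rwa [dist_comm]
    have hfle : f y ≤ L := by
      have h1 : 1 / dist x y ≤ 1 / r := by
        apply one_div_le_one_div_of_le hr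
        rw [dist_comm]; exact hy
      exact Real.log_le_log (by positivity) h1
    simp only [hg]
    rw [max_eq_right (by linarith)]
  have hstepC : ∫ y in D, g y ≤ ∫ y in ball x r, g y := by
    have hind : (ball x r).indicator g = g := by
      funext y
      by_cases h : y ∈ ball x r
      · rw [indicator_of_mem h]
      · rw [indicator_of_notMem h, hg0 y h]
    have h1 : ∫ y in D, g y = ∫ y in D ∩ ball x r, g y := by
      rw [← setIntegral_indicator measurableSet_ball, hind]
    rw [h1]
    refine setIntegral_mono_set hgB (Eventually.of_forall fun y => hg_nonneg y)
      (HasSubset.Subset.eventuallyLE inter_subset_right)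
  -- Step D : on the ball, the excess equals f - L (a.e.)
  have hne : ∀ᵐ y ∂(volume : Measure E2), y ≠ x := by
    rw [ae_iff]
    simpa using measure_singleton x
  have hstepD : ∫ y in ball x r, g y = (∫ y in ball x r, f y) - L * (π * r ^ 2) := by
    have hae : ∀ᵐ y ∂(volume.restrict (ball x r)), g y = f y - L := by
      filter_upwards [ae_restrict_mem measurableSet_ball, ae_restrict_of_ae hne] with y hy hyx
      have hd : 0 < dist x y := dist_pos.2 (Ne.symm hyx)
      have hdr : dist x y < r := by rw [dist_comm]; exact mem_ball.1 hy
      have h1 : L ≤ f y := by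
        apply Real.log_le_log (by positivity)
        exact one_div_le_one_div_of_le hd hdr.le
      simp only [hg]
      rw [max_eq_left (by linarith)]
    rw [integral_congr_ae hae,
      integral_sub (hIf r) (integrableOn_const measure_ball_lt_top.ne),
      setIntegral_const, measureReal_def, hπr2, smul_eq_mul]
    ring
  -- Step E : bound the integral of f over the ball
  have hstepE : ∫ y in ball x r, f y ≤ L * (π * r ^ 2) + 2 * π * r ^ 2 := by
    have hptE : ∀ᵐ y ∂(volume.restrict (ball x r)), f y ≤ L + r * (dist x y)⁻¹ := by
      filter_upwards [ae_restrict_of_ae hne] with y hyx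
      have hd : 0 < dist x y := dist_pos.2 (Ne.symm hyx)
      have h1 : f y - L = Real.log (r / dist x y) := by
        simp only [hf, hL]
        rw [one_div, one_div, Real.log_inv, Real.log_inv,
          Real.log_div (ne_of_gt hr) (ne_of_gt hd)]
        ring
      have h2 : Real.log (r / dist x y) ≤ r / dist x y :=
        (Real.log_le_sub_one_of_pos (by positivity)).trans (by linarith [div_pos hr hd])
      have h3 : r / dist x y = r * (dist x y)⁻¹ := div_eq_mul_inv _ _
      linarith
    have hIinv : IntegrableOn (fun y : E2 => L + r * (dist x y)⁻¹) (ball x r) := by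
      refine (integrableOn_const measure_ball_lt_top.ne).add ?_
      exact (integrableOn_dist_transfer x r (fun t => t⁻¹)
        (integrableOn_inv_norm_E2 r)).const_mul r
    have h := integral_mono_ae (hIf r) hIinv hptE
    rw [integral_add (integrableOn_const (C := L) measure_ball_lt_top.ne)
        ((integrableOn_dist_transfer x r (fun t => t⁻¹)
          (integrableOn_inv_norm_E2 r)).const_mul r),
      setIntegral_const, measureReal_def, hπr2, smul_eq_mul, integral_const_mul,
      setIntegral_inv_dist x hr] at h
    calc ∫ y in ball x r, f y ≤ π * r ^ 2 * L + r * (2 * π * r) := h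
      _ = L * (π * r ^ 2) + 2 * π * r ^ 2 := by ring
  -- combine
  have hcomb : ∫ y in D, f y * ω y ≤ L * κ + M * (L * (π * r ^ 2) + 2 * π * r ^ 2
      - L * (π * r ^ 2)) := by
    have h1 : ∫ y in ball x r, g y ≤ L * (π * r ^ 2) + 2 * π * r ^ 2 - L * (π * r ^ 2) := by
      rw [hstepD]; linarith
    have h2 : ∫ y in D, g y ≤ L * (π * r ^ 2) + 2 * π * r ^ 2 - L * (π * r ^ 2) :=
      hstepC.trans h1
    have h3 : M * ∫ y in D, g y ≤ M * (L * (π * r ^ 2) + 2 * π * r ^ 2 - L * (π * r ^ 2)) :=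
      mul_le_mul_of_nonneg_left h2 hM.le
    linarith
  have hfinal : L * κ + M * (L * (π * r ^ 2) + 2 * π * r ^ 2 - L * (π * r ^ 2))
      = κ * L + 2 * κ := by
    have : M * (2 * π * r ^ 2) = 2 * κ := by rw [← hκ]; ring
    nlinarith [hκ]
  rw [hfinal] at hcomb
  exact hcomb

open Metric in
/-- Upper energy bound via rearrangement: for `D ⊂ ℝ²` bounded, `Λ ≥ 1`, `κ > 0`
fixed, there is `C > 0` independent of `ε` such that for all `ε > 0` and all
`ω ∈ A_ε = {0 ≤ ω ≤ Λ/ε², ∫_D ω = κ}`,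
`∫∫ ln(1/|x-y|) ω(x) ω(y) dxdy ≤ κ² ln(1/ε) + C`. -/
theorem stmt9 (D : Set (EuclideanSpace ℝ (Fin 2)))
    (hD_meas : MeasurableSet D) (hD_bdd : Bornology.IsBounded D)
    (Λ κ : ℝ) (hΛ : 1 ≤ Λ) (hκ : 0 < κ) :
    ∃ C > (0 : ℝ), ∀ ε > (0 : ℝ), ∀ ω : EuclideanSpace ℝ (Fin 2) → ℝ,
      Measurable ω →
      (∀ᵐ x ∂(volume.restrict D), 0 ≤ ω x ∧ ω x ≤ Λ / ε ^ 2) →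
      (∫ x in D, ω x = κ) →
      (∫ x in D, ∫ y in D, Real.log (1 / dist x y) * ω x * ω y)
        ≤ κ ^ 2 * Real.log (1 / ε) + C := by
  have hπ : 0 < π := pi_pos
  have hΛ0 : (0:ℝ) < Λ := lt_of_lt_of_le one_pos hΛ
  set s : ℝ := Real.sqrt (κ / (Λ * π)) with hs
  have hs0 : 0 < s := Real.sqrt_pos.2 (by positivity)
  set b : ℝ := κ * Real.log (1/s) + 2*κ with hb
  have hCpos : (0:ℝ) < max (κ * b) 0 + 1 := by
    have : (0:ℝ) ≤ max (κ * b) 0 := le_max_right _ _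
    linarith
  refine ⟨max (κ * b) 0 + 1, hCpos, ?_⟩
  intro ε hε ω hω hbd hint
  set M : ℝ := Λ / ε^2 with hM
  have hM0 : 0 < M := by positivity
  set r : ℝ := ε * s with hr
  have hr0 : 0 < r := by positivity
  have hκM : M * (π * r^2) = κ := by
    have hs2 : s^2 = κ / (Λ * π) := Real.sq_sqrt (by positivity)
    rw [hr, hM, mul_pow, hs2]
    field_simp
  obtain ⟨R0, hR0⟩ := hD_bdd.subset_closedBall (0 : E2)
  have hDball : ∀ x ∈ D, D ⊆ ball x (2*R0+1) := by
    intro x hx y hy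
    have h1 := mem_closedBall.1 (hR0 hy)
    have h2 := mem_closedBall.1 (hR0 hx)
    rw [mem_ball]
    calc dist y x ≤ dist y 0 + dist 0 x := dist_triangle _ _ _
      _ = dist y 0 + dist x 0 := by rw [dist_comm (0:E2) x]
      _ < 2*R0 + 1 := by linarith
  set R' : ℝ := 2*R0+1 with hR'
  set c1 : ℝ := κ * Real.log (1/ε) + b with hc1
  have hinner : ∀ x ∈ D, (∫ y in D, Real.log (1 / dist x y) * ω y) ≤ c1 := by
    intro x hx
    have h := bathtub_bound D hD_meas x R' (hDball x hx) ω hω M hM0 hbd r hr0 κ hint hκM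
    have hlog : Real.log (1/r) = Real.log (1/ε) + Real.log (1/s) := by
      rw [hr, one_div, mul_inv, Real.log_mul (by positivity) (by positivity), one_div, one_div]
    calc (∫ y in D, Real.log (1 / dist x y) * ω y) ≤ κ * Real.log (1/r) + 2*κ := h
      _ = c1 := by rw [hlog, hc1, hb]; ring
  have hsplit : ∀ x : E2, (∫ y in D, Real.log (1 / dist x y) * ω x * ω y)
      = ω x * ∫ y in D, Real.log (1 / dist x y) * ω y := by
    intro x
    rw [← integral_const_mul]
    exact integral_congr_ae (Eventually.of_forall fun y => by ring)
  rw [show (∫ x in D, ∫ y in D, Real.log (1 / dist x y) * ω x * ω y)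
      = ∫ x in D, ω x * ∫ y in D, Real.log (1 / dist x y) * ω y from
    integral_congr_ae (Eventually.of_forall fun x => hsplit x)]
  have hFm : Measurable (fun p : E2 × E2 => Real.log (1 / dist p.1 p.2) * ω p.2) := by
    have hdm : Measurable (fun p : E2 × E2 => dist p.1 p.2) := measurable_dist
    exact (Real.measurable_log.comp (measurable_const.div hdm)).mul (hω.comp measurable_snd)
  have hIm : StronglyMeasurable (fun x : E2 => ∫ y in D, Real.log (1 / dist x y) * ω y) :=
    hFm.stronglyMeasurable.integral_prod_right'
  set K0 : ℝ := ∫ z in ball (0:E2) R', |Real.log ‖z‖| with hK0def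
  have hK0 : 0 ≤ K0 := integral_nonneg fun z => abs_nonneg _
  have habs_trans : ∀ x : E2, (∫ y in ball x R', |Real.log (1 / dist x y)|) = K0 := by
    intro x
    have h := setIntegral_dist_transfer x R' (fun t => |Real.log (1/t)|)
    rw [h, hK0def]
    refine setIntegral_congr_fun measurableSet_ball fun z _ => ?_
    rw [one_div, Real.log_inv, abs_neg]
  have hvolD : volume D < ⊤ := hD_bdd.measure_lt_top
  have habsI : ∀ x : E2, IntegrableOn (fun y : E2 => |Real.log (1/dist x y)|) (ball x R') :=
    fun x => (integrableOn_log_dist x R').abs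
  have hfω_int : ∀ x : E2, x ∈ D → IntegrableOn
      (fun y : E2 => Real.log (1/dist x y) * ω y) D := by
    intro x hx
    have hIfD : IntegrableOn (fun y : E2 => Real.log (1/dist x y)) D :=
      (integrableOn_log_dist x R').mono_set (hDball x hx)
    have hdm : Measurable (fun y : E2 => dist x y) :=
      (continuous_const.dist continuous_id).measurable
    have hfm : Measurable (fun y : E2 => Real.log (1/dist x y)) :=
      Real.measurable_log.comp (measurable_const.div hdm)
    refine Integrable.mono' (g := fun y => M * |Real.log (1/dist x y)|)
      (hIfD.abs.const_mul M) ((hfm.mul hω).aestronglyMeasurable) ?_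
    filter_upwards [hbd] with y hy
    rw [Real.norm_eq_abs, abs_mul]
    have h1 : |ω y| ≤ M := by rw [abs_of_nonneg hy.1]; exact hy.2
    calc |Real.log (1/dist x y)| * |ω y| ≤ |Real.log (1/dist x y)| * M :=
        mul_le_mul_of_nonneg_left h1 (abs_nonneg _)
      _ = M * |Real.log (1/dist x y)| := mul_comm _ _
  have hIbound : ∀ x ∈ D, |∫ y in D, Real.log (1 / dist x y) * ω y| ≤ M * K0 := by
    intro x hx
    have hIfD : IntegrableOn (fun y : E2 => Real.log (1/dist x y)) D :=
      (integrableOn_log_dist x R').mono_set (hDball x hx)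
    calc |∫ y in D, Real.log (1 / dist x y) * ω y|
        ≤ ∫ y in D, |Real.log (1 / dist x y) * ω y| := by
          rw [← Real.norm_eq_abs]
          exact (norm_integral_le_integral_norm _).trans (le_of_eq
            (integral_congr_ae (Eventually.of_forall fun y => by simp only [Real.norm_eq_abs])))
      _ ≤ ∫ y in D, M * |Real.log (1 / dist x y)| := by
          refine integral_mono_ae (hfω_int x hx).abs (hIfD.abs.const_mul M) ?_
          filter_upwards [hbd] with y hy
          rw [abs_mul]
          have h1 : |ω y| ≤ M := by rw [abs_of_nonneg hy.1]; exact hy.2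
          calc |Real.log (1/dist x y)| * |ω y| ≤ |Real.log (1/dist x y)| * M :=
              mul_le_mul_of_nonneg_left h1 (abs_nonneg _)
            _ = M * |Real.log (1/dist x y)| := mul_comm _ _
      _ = M * ∫ y in D, |Real.log (1 / dist x y)| := integral_const_mul _ _
      _ ≤ M * ∫ y in ball x R', |Real.log (1 / dist x y)| := by
          refine mul_le_mul_of_nonneg_left ?_ hM0.le
          refine setIntegral_mono_set (habsI x) (Eventually.of_forall fun y => abs_nonneg _)
            (HasSubset.Subset.eventuallyLE (hDball x hx))
      _ = M * K0 := by rw [habs_trans x]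
  have hωD : IntegrableOn ω D := by
    refine Integrable.mono' (g := fun _ => M)
      (integrableOn_const hvolD.ne) hω.aestronglyMeasurable ?_
    filter_upwards [hbd] with y hy
    rw [Real.norm_eq_abs, abs_of_nonneg hy.1]; exact hy.2
  have hout_int : IntegrableOn
      (fun x => ω x * ∫ y in D, Real.log (1 / dist x y) * ω y) D := by
    refine Integrable.mono' (g := fun _ => M * (M * K0))
      (integrableOn_const hvolD.ne)
      (hω.aestronglyMeasurable.mul hIm.aestronglyMeasurable) ?_
    filter_upwards [hbd, ae_restrict_mem hD_meas] with x hx hxD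
    rw [Real.norm_eq_abs, abs_mul]
    have h1 : |ω x| ≤ M := by rw [abs_of_nonneg hx.1]; exact hx.2
    exact mul_le_mul h1 (hIbound x hxD) (abs_nonneg _) hM0.le
  have hout_rhs : IntegrableOn (fun x => ω x * c1) D := hωD.mul_const c1
  have hmono : (∫ x in D, ω x * ∫ y in D, Real.log (1 / dist x y) * ω y)
      ≤ ∫ x in D, ω x * c1 := by
    refine integral_mono_ae hout_int hout_rhs ?_
    filter_upwards [hbd, ae_restrict_mem hD_meas] with x hx hxD
    exact mul_le_mul_of_nonneg_left (hinner x hxD) hx.1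
  have hrhs : (∫ x in D, ω x * c1) = κ * c1 := by
    rw [integral_mul_const, hint]
  calc (∫ x in D, ω x * ∫ y in D, Real.log (1 / dist x y) * ω y)
      ≤ κ * c1 := by rw [← hrhs]; exact hmono
    _ = κ^2 * Real.log (1/ε) + κ * b := by rw [hc1]; ring
    _ ≤ κ^2 * Real.log (1/ε) + (max (κ * b) 0 + 1) :=
        by linarith [le_max_left (κ*b) 0]

end EnergyAux
end

section
/- (Concentration lemma) Let D ⊂ ℝ² be bounded, Ω ⊂ D, 0 < ε < 1, A ≥ 0, and Γ ∈ L¹(D) nonnegative with ∫_D Γ = 1 and ‖Γ‖_{L^p(D)} ≤ C₁ ε^{−2(1−1/p)} for some 1 < p ≤ ∞ and C₁ > 0. Suppose that for every x ∈ Ω, (1−A)·ln(1/ε) ≤ ∫_D ln(1/|x−y|) Γ(y) dy + C₂ for a constant C₂ > 0. Then there exists R > 1, depending only on C₁, C₂, p and diam(D) but not on A or ε, such that diam(Ω) ≤ R·ε^{1−2A}. -/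
open Set Filter MeasureTheory Real
open scoped ENNReal NNReal

private lemma mylog_mono {x y : ℝ} (hx : 0 < x) (h : x ≤ y) : Real.log x ≤ Real.log y :=
  (Real.log_le_log_iff hx (lt_of_lt_of_le hx h)).mpr h

set_option maxHeartbeats 1000000 in
/-- Concentration lemma: if `Γ ≥ 0`, `∫_D Γ = 1`, `‖Γ‖_{L^p(D)} ≤ C₁ ε^{-2(1-1/p)}`
and `(1-A) ln(1/ε) ≤ ∫_D ln(1/|x-y|) Γ(y) dy + C₂` for every `x ∈ Ω`, then
`diam Ω ≤ R ε^{1-2A}` for some `R > 1` depending only on `C₁, C₂, p, D` but not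
on `A` or `ε`. -/
theorem stmt10 (D : Set (EuclideanSpace ℝ (Fin 2)))
    (hD_meas : MeasurableSet D) (hD_bdd : Bornology.IsBounded D)
    (p : ENNReal) (hp : 1 < p) (C₁ C₂ : ℝ) (hC₁ : 0 < C₁) (hC₂ : 0 < C₂) :
    ∃ R > (1 : ℝ), ∀ ε ∈ Ioo (0 : ℝ) 1, ∀ A ≥ (0 : ℝ),
      ∀ Γ : EuclideanSpace ℝ (Fin 2) → ℝ, Measurable Γ →
      (∀ᵐ x ∂(volume.restrict D), 0 ≤ Γ x) →
      (∫ x in D, Γ x = 1) →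
      eLpNorm Γ p (volume.restrict D)
        ≤ ENNReal.ofReal (C₁ * ε ^ (-(2 * (1 - 1 / p.toReal)))) →
      ∀ Ω ⊆ D, (∀ x ∈ Ω,
        (1 - A) * Real.log (1 / ε)
          ≤ (∫ y in D, Real.log (1 / dist x y) * Γ y) + C₂) →
      Metric.diam Ω ≤ R * ε ^ ((1 : ℝ) - 2 * A) := by
  classical
  have hτpos : 0 < 1 - 1 / p.toReal := by
    rcases eq_or_ne p ⊤ with h | h
    · simp [h]
    · have h1 : (1 : ENNReal).toReal < p.toReal := ENNReal.toReal_strict_mono h hp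
      simp only [ENNReal.toReal_one] at h1
      have h2 : 1 / p.toReal < 1 := by
        rw [div_lt_one (by linarith)]; exact h1
      linarith
  set τ : ℝ := 1 - 1 / p.toReal with hτdef
  set κ : ℝ≥0∞ := volume (Metric.ball (0 : EuclideanSpace ℝ (Fin 2)) 1) with hκdef
  have hκtop : κ ≠ ⊤ := measure_ball_lt_top.ne
  set β : ℝ := (1 / 4 : ℝ) ^ τ with hβdef
  have hβpos : 0 < β := Real.rpow_pos_of_pos (by norm_num) _
  have hβlt : β < 1 := Real.rpow_lt_one (by norm_num) (by norm_num) hτpos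
  set G : ℝ≥0∞ := (1 - ENNReal.ofReal β)⁻¹ with hGdef
  have hGtop : G ≠ ⊤ := by
    simp only [hGdef, Ne, ENNReal.inv_eq_top, tsub_eq_zero_iff_le, not_le]
    exact ENNReal.ofReal_lt_one.mpr hβlt
  set C₃ : ℝ := (ENNReal.ofReal (Real.log 2) * (ENNReal.ofReal C₁ * κ ^ τ) * G).toReal
    with hC₃def
  have hC₃nonneg : 0 ≤ C₃ := ENNReal.toReal_nonneg
  have hCetop : ENNReal.ofReal (Real.log 2) * (ENNReal.ofReal C₁ * κ ^ τ) * G ≠ ⊤ :=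
    ENNReal.mul_ne_top
      (ENNReal.mul_ne_top ENNReal.ofReal_ne_top
        (ENNReal.mul_ne_top ENNReal.ofReal_ne_top
          (ENNReal.rpow_ne_top_of_nonneg hτpos.le hκtop))) hGtop
  have hCe : ENNReal.ofReal (Real.log 2) * (ENNReal.ofReal C₁ * κ ^ τ) * G
      = ENNReal.ofReal C₃ := (ENNReal.ofReal_toReal hCetop).symm
  refine ⟨2 * Real.exp (2 * (C₂ + C₃) + 1), ?_, ?_⟩
  · have h := Real.one_le_exp (by positivity : (0:ℝ) ≤ 2 * (C₂ + C₃) + 1)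
    linarith
  intro ε hε A hA Γ hΓm hΓ0 hΓ1 hΓlp Ω hΩD hpot
  obtain ⟨hε0, hε1⟩ := hε
  set ρ : ℝ := Real.exp (2 * (C₂ + C₃) + 1) * ε ^ ((1:ℝ) - 2 * A) with hρdef
  have hρpos : 0 < ρ := mul_pos (Real.exp_pos _) (Real.rpow_pos_of_pos hε0 _)
  have hL : Real.log (1 / ε) = - Real.log ε := by rw [one_div, Real.log_inv]
  have hLpos : 0 < Real.log (1 / ε) := Real.log_pos ((one_lt_div hε0).mpr hε1)
  have hΓint : IntegrableOn Γ D volume := by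
    by_contra h
    rw [MeasureTheory.integral_undef h] at hΓ1
    norm_num at hΓ1
  -- Hölder-type bound via Lp monotonicity
  have lemA : ∀ s : Set (EuclideanSpace ℝ (Fin 2)), MeasurableSet s →
      ∫⁻ y in s, ENNReal.ofReal (Γ y) ∂(volume.restrict D)
        ≤ ENNReal.ofReal (C₁ * ε ^ (-(2 * τ))) * volume s ^ τ := by
    intro s hs
    have hexp : 1 / (1 : ENNReal).toReal - 1 / p.toReal = τ := by
      rw [hτdef]; norm_num
    have h1 : ∫⁻ y in s, ENNReal.ofReal (Γ y) ∂(volume.restrict D)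
        ≤ eLpNorm Γ 1 ((volume.restrict D).restrict s) := by
      rw [eLpNorm_one_eq_lintegral_enorm]
      exact lintegral_mono fun y => Real.ofReal_le_enorm _
    have h2 := eLpNorm_le_eLpNorm_mul_rpow_measure_univ
      (μ := (volume.restrict D).restrict s) hp.le hΓm.aestronglyMeasurable
    rw [hexp] at h2
    have h3 : eLpNorm Γ p ((volume.restrict D).restrict s)
        ≤ eLpNorm Γ p (volume.restrict D) :=
      eLpNorm_mono_measure _ Measure.restrict_le_self
    have h4 : ((volume.restrict D).restrict s) Set.univ ≤ volume s := by
      rw [Measure.restrict_apply_univ, Measure.restrict_apply hs]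
      exact measure_mono inter_subset_left
    calc ∫⁻ y in s, ENNReal.ofReal (Γ y) ∂(volume.restrict D)
        ≤ eLpNorm Γ 1 ((volume.restrict D).restrict s) := h1
      _ ≤ eLpNorm Γ p ((volume.restrict D).restrict s)
          * ((volume.restrict D).restrict s) Set.univ ^ τ := h2
      _ ≤ ENNReal.ofReal (C₁ * ε ^ (-(2 * τ))) * volume s ^ τ :=
          mul_le_mul' (h3.trans hΓlp) (ENNReal.rpow_le_rpow h4 hτpos.le)
  have ballM : ∀ (x : EuclideanSpace ℝ (Fin 2)) (r : ℝ), 0 ≤ r →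
      ∫⁻ y in Metric.ball x r, ENNReal.ofReal (Γ y) ∂(volume.restrict D)
        ≤ ENNReal.ofReal (C₁ * ε ^ (-(2 * τ))) * (ENNReal.ofReal (r ^ 2) * κ) ^ τ := by
    intro x r hr
    refine (lemA _ measurableSet_ball).trans ?_
    refine mul_le_mul_right (ENNReal.rpow_le_rpow (le_of_eq ?_) hτpos.le) _
    rw [Measure.addHaar_ball volume x hr, finrank_euclideanSpace_fin]
  -- per-term dyadic estimate
  have hεinv : ε ^ (-(2*τ)) * ε ^ (2*τ) = 1 := by
    rw [← Real.rpow_add hε0]; norm_num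
  -- main concentration estimate
  have main : ∀ x ∈ Ω, 1 / 2 < ∫ y in D, (Metric.ball x ρ).indicator Γ y := by
    intro x hx
    have hxD : x ∈ D := hΩD hx
    have hdm : Measurable fun y : EuclideanSpace ℝ (Fin 2) => dist x y :=
      (continuous_const.dist continuous_id).measurable
    have hgm : Measurable fun y : EuclideanSpace ℝ (Fin 2) =>
        max (Real.log ε - Real.log (dist x y)) 0 :=
      (measurable_const.sub (Real.measurable_log.comp hdm)).max measurable_const
    -- pointwise dyadic bound
    have gsum : ∀ y, ENNReal.ofReal (max (Real.log ε - Real.log (dist x y)) 0)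
        ≤ ENNReal.ofReal (Real.log 2) *
          ∑' k : ℕ, (Metric.ball x (ε * (1/2) ^ k)).indicator (fun _ => (1 : ℝ≥0∞)) y := by
      intro y
      rcases le_or_gt ε (dist x y) with hd | hd
      · have h0 : Real.log ε - Real.log (dist x y) ≤ 0 :=
          sub_nonpos.mpr (mylog_mono hε0 hd)
        rw [max_eq_right h0, ENNReal.ofReal_zero]
        exact zero_le
      rcases eq_or_lt_of_le (dist_nonneg : 0 ≤ dist x y) with hd0 | hd0
      · rw [← hd0]
        have h0 : Real.log ε - Real.log 0 ≤ 0 := by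
          rw [Real.log_zero, sub_zero]
          exact Real.log_nonpos hε0.le hε1.le
        rw [max_eq_right h0, ENNReal.ofReal_zero]
        exact zero_le
      · have hP : ∃ n : ℕ, ε * (1/2) ^ (n+1) ≤ dist x y := by
          obtain ⟨n, hn⟩ := exists_pow_lt_of_lt_one (div_pos hd0 hε0)
            (by norm_num : (1/2 : ℝ) < 1)
          refine ⟨n, ?_⟩
          have h1 : (1/2 : ℝ) ^ n * ε < dist x y := (lt_div_iff₀ hε0).mp hn
          have h2 : ((1:ℝ)/2) ^ (n+1) = (1/2) ^ n * (1/2) := pow_succ _ _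
          nlinarith [pow_pos (by norm_num : (0:ℝ) < 1/2) n]
        set n := Nat.find hP with hn
        have hn1 : ε * (1/2) ^ (n+1) ≤ dist x y := Nat.find_spec hP
        have hmin : ∀ m, m < n → ¬ (ε * (1/2) ^ (m+1) ≤ dist x y) :=
          fun m hm => Nat.find_min hP hm
        have hmem : ∀ k, k ≤ n → y ∈ Metric.ball x (ε * (1/2) ^ k) := by
          intro k hk
          rw [Metric.mem_ball, dist_comm]
          rcases Nat.eq_zero_or_pos k with rfl | hkpos
          · simpa using hd
          · have h5 := hmin (k-1) (by omega)
            push_neg at h5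
            have hk' : k - 1 + 1 = k := by omega
            rwa [hk'] at h5
        have hub : Real.log ε - Real.log (dist x y) ≤ ((n:ℝ)+1) * Real.log 2 := by
          have h2 : Real.log (ε * (1/2) ^ (n+1))
              = Real.log ε - ((n:ℝ)+1) * Real.log 2 := by
            rw [Real.log_mul (ne_of_gt hε0) (by positivity), Real.log_pow,
              one_div, Real.log_inv]
            push_cast
            ring
          have h3 := mylog_mono (by positivity) hn1
          rw [h2] at h3
          linarith
        have hsum_ge : ((n : ℝ≥0∞) + 1)
            ≤ ∑' k : ℕ, (Metric.ball x (ε * (1/2) ^ k)).indicator (fun _ => (1:ℝ≥0∞)) y := by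
          calc ((n : ℝ≥0∞) + 1)
              = ∑ k ∈ Finset.range (n+1),
                  (Metric.ball x (ε * (1/2) ^ k)).indicator (fun _ => (1:ℝ≥0∞)) y := by
                rw [Finset.sum_congr rfl fun k hk =>
                  (Set.indicator_of_mem
                    (hmem k (Nat.lt_succ_iff.mp (Finset.mem_range.mp hk)))
                    (fun _ => (1:ℝ≥0∞)))]
                simp
            _ ≤ _ := ENNReal.sum_le_tsum _
        calc ENNReal.ofReal (max (Real.log ε - Real.log (dist x y)) 0)
            ≤ ENNReal.ofReal (((n:ℝ)+1) * Real.log 2) :=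
              ENNReal.ofReal_le_ofReal
                (max_le hub (mul_nonneg (by positivity) (Real.log_nonneg one_le_two)))
          _ = ((n : ℝ≥0∞)+1) * ENNReal.ofReal (Real.log 2) := by
              rw [ENNReal.ofReal_mul (by positivity)]
              congr 1
              rw [ENNReal.ofReal_add (by positivity) zero_le_one, ENNReal.ofReal_natCast,
                ENNReal.ofReal_one]
          _ ≤ (∑' k : ℕ, (Metric.ball x (ε * (1/2) ^ k)).indicator (fun _ => (1:ℝ≥0∞)) y)
                * ENNReal.ofReal (Real.log 2) := mul_le_mul_left hsum_ge _
          _ = _ := mul_comm _ _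
    have hterm : ∀ k : ℕ,
        ∫⁻ y in Metric.ball x (ε * (1/2) ^ k), ENNReal.ofReal (Γ y) ∂(volume.restrict D)
          ≤ (ENNReal.ofReal C₁ * κ ^ τ) * ENNReal.ofReal β ^ k := by
      intro k
      refine (ballM x _ (by positivity)).trans (le_of_eq ?_)
      have e1 : ((ε * (1/2) ^ k) ^ 2 : ℝ) = ε ^ 2 * (1/4 : ℝ) ^ k := by
        rw [mul_pow, ← pow_mul, mul_comm k 2, pow_mul]
        norm_num
      have e2 : ((ε ^ 2 : ℝ)) ^ τ = ε ^ (2 * τ) := by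
        rw [← Real.rpow_natCast ε 2, ← Real.rpow_mul hε0.le]
        norm_num
      have e3 : (((1:ℝ)/4) ^ k) ^ τ = β ^ k := by
        rw [← Real.rpow_natCast ((1:ℝ)/4) k, ← Real.rpow_mul (by norm_num), mul_comm,
          Real.rpow_mul (by norm_num), Real.rpow_natCast]
      have hre : C₁ * ε ^ (-(2*τ)) * (ε ^ (2*τ) * β ^ k) = C₁ * β ^ k := by
        rw [show C₁ * ε ^ (-(2*τ)) * (ε ^ (2*τ) * β ^ k)
            = C₁ * β ^ k * (ε ^ (-(2*τ)) * ε ^ (2*τ)) from by ring, hεinv, mul_one]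
      calc ENNReal.ofReal (C₁ * ε ^ (-(2 * τ))) * (ENNReal.ofReal ((ε * (1/2) ^ k) ^ 2) * κ) ^ τ
          = ENNReal.ofReal (C₁ * ε ^ (-(2 * τ))) *
              (ENNReal.ofReal (ε ^ (2*τ) * β ^ k) * κ ^ τ) := by
            rw [ENNReal.mul_rpow_of_nonneg _ _ hτpos.le,
              ENNReal.ofReal_rpow_of_nonneg (by positivity) hτpos.le, e1,
              Real.mul_rpow (by positivity) (by positivity), e2, e3]
        _ = ENNReal.ofReal (C₁ * β ^ k) * κ ^ τ := by
            rw [← mul_assoc, ← ENNReal.ofReal_mul (by positivity), hre]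
        _ = (ENNReal.ofReal C₁ * κ ^ τ) * ENNReal.ofReal β ^ k := by
            rw [ENNReal.ofReal_mul hC₁.le, ← ENNReal.ofReal_pow hβpos.le]
            ring
    have Sbound : ∫⁻ y in D,
        ENNReal.ofReal (max (Real.log ε - Real.log (dist x y)) 0 * Γ y) ∂volume
        ≤ ENNReal.ofReal C₃ := by
      have hmeas_ind : ∀ k : ℕ, AEMeasurable
          (fun y => (Metric.ball x (ε * (1/2) ^ k)).indicator
            (fun y => ENNReal.ofReal (Γ y)) y) (volume.restrict D) :=
        fun k => ((ENNReal.measurable_ofReal.comp hΓm).indicator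
          measurableSet_ball).aemeasurable
      calc ∫⁻ y in D, ENNReal.ofReal (max (Real.log ε - Real.log (dist x y)) 0 * Γ y) ∂volume
          ≤ ∫⁻ y in D, ENNReal.ofReal (Real.log 2) *
              ∑' k : ℕ, (Metric.ball x (ε * (1/2) ^ k)).indicator
                (fun y => ENNReal.ofReal (Γ y)) y ∂volume := by
            refine lintegral_mono fun y => ?_
            rw [ENNReal.ofReal_mul (le_max_right _ _)]
            refine (mul_le_mul_left (gsum y) (ENNReal.ofReal (Γ y))).trans (le_of_eq ?_)
            rw [mul_assoc]
            congr 1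
            rw [← ENNReal.tsum_mul_right]
            exact tsum_congr fun k => by
              by_cases hmem : y ∈ Metric.ball x (ε * (1/2) ^ k) <;>
                simp [Set.indicator_apply, hmem]
        _ = ENNReal.ofReal (Real.log 2) * ∑' k : ℕ,
              ∫⁻ y in Metric.ball x (ε * (1/2) ^ k), ENNReal.ofReal (Γ y)
                ∂(volume.restrict D) := by
            rw [lintegral_const_mul' _ _ ENNReal.ofReal_ne_top, lintegral_tsum hmeas_ind]
            congr 1
            exact tsum_congr fun k => lintegral_indicator measurableSet_ball _
        _ ≤ ENNReal.ofReal (Real.log 2) * ∑' k : ℕ,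
              (ENNReal.ofReal C₁ * κ ^ τ) * ENNReal.ofReal β ^ k :=
            mul_le_mul_right (ENNReal.tsum_le_tsum hterm) _
        _ = ENNReal.ofReal C₃ := by
            rw [ENNReal.tsum_mul_left, ENNReal.tsum_geometric, ← hCe, hGdef]
            ring
    -- real-variable consequences
    have hgΓmeas : AEStronglyMeasurable
        (fun y => max (Real.log ε - Real.log (dist x y)) 0 * Γ y) (volume.restrict D) :=
      (hgm.mul hΓm).aestronglyMeasurable
    have hgΓnn : 0 ≤ᵐ[volume.restrict D]
        fun y => max (Real.log ε - Real.log (dist x y)) 0 * Γ y := by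
      filter_upwards [hΓ0] with y hy
      exact mul_nonneg (le_max_right _ _) hy
    have hgΓint : Integrable
        (fun y => max (Real.log ε - Real.log (dist x y)) 0 * Γ y) (volume.restrict D) := by
      refine ⟨hgΓmeas, ?_⟩
      rw [hasFiniteIntegral_iff_ofReal hgΓnn]
      exact lt_of_le_of_lt Sbound ENNReal.ofReal_lt_top
    have hJ : (∫ y in D, max (Real.log ε - Real.log (dist x y)) 0 * Γ y) ≤ C₃ := by
      rw [MeasureTheory.integral_eq_lintegral_of_nonneg_ae hgΓnn hgΓmeas]
      refine le_trans (ENNReal.toReal_mono ENNReal.ofReal_ne_top Sbound) ?_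
      rw [ENNReal.toReal_ofReal hC₃nonneg]
    set b : ℝ := max 0 (Real.log (Metric.diam D)) with hbdef
    have hb0 : 0 ≤ b := le_max_left _ _
    have habs : ∀ y ∈ D, |Real.log (1 / dist x y)|
        ≤ Real.log (1/ε) + max (Real.log ε - Real.log (dist x y)) 0 + b := by
      intro y hy
      have h1 : Real.log (1 / dist x y) = - Real.log (dist x y) := by
        rw [one_div, Real.log_inv]
      have hgy := le_max_left (Real.log ε - Real.log (dist x y)) 0
      have hgy0 := le_max_right (Real.log ε - Real.log (dist x y)) 0
      have h3 : Real.log (dist x y) ≤ b := by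
        rcases eq_or_lt_of_le (dist_nonneg : 0 ≤ dist x y) with h0 | h0
        · rw [← h0, Real.log_zero]; exact hb0
        · have hdd : dist x y ≤ Metric.diam D := Metric.dist_le_diam_of_mem hD_bdd hxD hy
          exact le_trans (mylog_mono h0 hdd) (le_max_right _ _)
      rw [h1, abs_le, hL]
      constructor <;> nlinarith [hLpos, hL]
    have hfm : Measurable fun y : EuclideanSpace ℝ (Fin 2) => Real.log (1 / dist x y) := by
      simp only [one_div]
      exact Real.measurable_log.comp hdm.inv
    have hfΓint : Integrable
        (fun y => Real.log (1 / dist x y) * Γ y) (volume.restrict D) := by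
      refine Integrable.mono'
        ((hΓint.const_mul (Real.log (1/ε) + b)).add hgΓint)
        ((hfm.mul hΓm).aestronglyMeasurable) ?_
      filter_upwards [hΓ0, ae_restrict_mem hD_meas] with y hy hyD
      simp only [Pi.add_apply]
      rw [norm_mul, Real.norm_eq_abs, Real.norm_eq_abs, abs_of_nonneg hy]
      have h1 := habs y hyD
      nlinarith [mul_nonneg (sub_nonneg.mpr h1) hy, abs_nonneg (Real.log (1 / dist x y))]
    set c : ℝ := Real.log ρ - Real.log ε with hcdef
    have hcval : c = 2 * (A * Real.log (1/ε) + C₂ + C₃) + 1 := by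
      rw [hcdef, hρdef, Real.log_mul (Real.exp_ne_zero _)
        (Real.rpow_pos_of_pos hε0 _).ne', Real.log_exp, Real.log_rpow hε0, hL]
      ring
    have hindint : Integrable ((Metric.ball x ρ)ᶜ.indicator Γ) (volume.restrict D) :=
      hΓint.indicator measurableSet_ball.compl
    have hindint' : Integrable ((Metric.ball x ρ).indicator Γ) (volume.restrict D) :=
      hΓint.indicator measurableSet_ball
    have hkey : (∫ y in D, Real.log (1 / dist x y) * Γ y)
        + c * ∫ y in D, (Metric.ball x ρ)ᶜ.indicator Γ y
        ≤ Real.log (1/ε) + C₃ := by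
      have hmono : (∫ y in D, (Real.log (1 / dist x y) * Γ y
            + c * (Metric.ball x ρ)ᶜ.indicator Γ y))
          ≤ ∫ y in D, (Real.log (1/ε) * Γ y
            + max (Real.log ε - Real.log (dist x y)) 0 * Γ y) := by
        refine integral_mono_ae (hfΓint.add (hindint.const_mul c))
          ((hΓint.const_mul _).add hgΓint) ?_
        filter_upwards [hΓ0] with y hy
        have hfid : Real.log (1 / dist x y) = - Real.log (dist x y) := by
          rw [one_div, Real.log_inv]
        have hgy := le_max_left (Real.log ε - Real.log (dist x y)) 0
        have hgy0 := le_max_right (Real.log ε - Real.log (dist x y)) 0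
        by_cases hyB : y ∈ Metric.ball x ρ
        · rw [Set.indicator_of_notMem (by simpa using hyB)]
          have h1 : Real.log (1 / dist x y)
              ≤ Real.log (1/ε) + max (Real.log ε - Real.log (dist x y)) 0 := by
            rw [hfid, hL]; linarith
          simp only [mul_zero, add_zero]
          nlinarith [mul_nonneg (sub_nonneg.mpr h1) hy]
        · rw [Set.indicator_of_mem (by simpa using hyB)]
          have hdge : ρ ≤ dist x y := by
            rw [Metric.mem_ball, not_lt, dist_comm] at hyB
            exact hyB
          have h2 : Real.log ρ ≤ Real.log (dist x y) := mylog_mono hρpos hdge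
          have h1 : Real.log (1 / dist x y) + c
              ≤ Real.log (1/ε) + max (Real.log ε - Real.log (dist x y)) 0 := by
            rw [hfid, hL, hcdef]; linarith
          nlinarith [mul_nonneg (sub_nonneg.mpr h1) hy]
      rw [integral_add hfΓint (hindint.const_mul c),
        integral_add (hΓint.const_mul _) hgΓint,
        integral_const_mul, integral_const_mul, hΓ1] at hmono
      linarith [hJ]
    have hmfar0 : 0 ≤ ∫ y in D, (Metric.ball x ρ)ᶜ.indicator Γ y := by
      refine integral_nonneg_of_ae ?_
      filter_upwards [hΓ0] with y hy
      exact Set.indicator_apply_nonneg fun _ => hy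
    have hfar : c * (∫ y in D, (Metric.ball x ρ)ᶜ.indicator Γ y)
        ≤ A * Real.log (1/ε) + C₂ + C₃ := by
      have hpot' := hpot x hx
      linarith [hkey]
    have hALpos : 0 ≤ A * Real.log (1/ε) := mul_nonneg hA hLpos.le
    have hmfar_lt : (∫ y in D, (Metric.ball x ρ)ᶜ.indicator Γ y) < 1/2 := by
      by_contra hge
      push_neg at hge
      have hcpos : 0 < c := by rw [hcval]; linarith
      have h6 : c * (1/2) ≤ c * ∫ y in D, (Metric.ball x ρ)ᶜ.indicator Γ y :=
        mul_le_mul_of_nonneg_left hge hcpos.le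
      linarith [hfar, hcval]
    have hsplit : (∫ y in D, (Metric.ball x ρ).indicator Γ y)
        + ∫ y in D, (Metric.ball x ρ)ᶜ.indicator Γ y = 1 := by
      rw [← integral_add hindint' hindint]
      rw [← hΓ1]
      refine integral_congr_ae (Eventually.of_forall fun y => ?_)
      by_cases hyB : y ∈ Metric.ball x ρ <;>
        simp [Set.indicator_apply, hyB]
    linarith
  -- final geometric step
  have h2ρ : 2 * Real.exp (2 * (C₂ + C₃) + 1) * ε ^ ((1:ℝ) - 2 * A) = 2 * ρ := by
    rw [hρdef]; ring
  refine Metric.diam_le_of_forall_dist_le (by positivity) ?_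
  intro x₁ h₁ x₂ h₂
  by_contra hgt
  push_neg at hgt
  rw [h2ρ] at hgt
  have hdisj : ∀ y, y ∈ Metric.ball x₁ ρ → y ∉ Metric.ball x₂ ρ := by
    intro y hy1 hy2
    rw [Metric.mem_ball] at hy1 hy2
    have ht := dist_triangle x₁ y x₂
    have h1 : dist x₁ y = dist y x₁ := dist_comm _ _
    have h2 : dist y x₂ = dist y x₂ := rfl
    linarith
  have hsum : (∫ y in D, (Metric.ball x₁ ρ).indicator Γ y)
      + ∫ y in D, (Metric.ball x₂ ρ).indicator Γ y ≤ 1 := by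
    rw [← hΓ1, ← integral_add (hΓint.indicator measurableSet_ball)
      (hΓint.indicator measurableSet_ball)]
    refine integral_mono_ae ((hΓint.indicator measurableSet_ball).add
      (hΓint.indicator measurableSet_ball)) hΓint ?_
    filter_upwards [hΓ0] with y hy
    by_cases hy1 : y ∈ Metric.ball x₁ ρ
    · rw [Set.indicator_of_mem hy1, Set.indicator_of_notMem (hdisj y hy1)]
      simp
    · rw [Set.indicator_of_notMem hy1]
      by_cases hy2 : y ∈ Metric.ball x₂ ρ
      · rw [Set.indicator_of_mem hy2]; simp
      · rw [Set.indicator_of_notMem hy2]; simpa using hy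
  linarith [main x₁ h₁, main x₂ h₂]
end

section
/- Let ψ = 𝒢ω − μ where ω ∈ L^∞(D), 0 ≤ ω ≤ Λ/ε², ∫_D ω = κ, and suppose μ ≥ (κ/2π)ln(1/ε) − C₀. Then for every x ∈ D, ψ(x) ≤ (κ/4π)ln Λ + C for a constant C depending only on C₀, κ, D but not on ε and Λ. -/
open Set Filter MeasureTheory Real

section Aux
open Metric

lemma vol_ball2 (x : EuclideanSpace ℝ (Fin 2)) (r : ℝ) (hr : 0 ≤ r) :
    (volume (Metric.ball x r)) = ENNReal.ofReal (π * r ^ 2) := by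
  rw [EuclideanSpace.volume_ball, Fintype.card_fin]
  norm_num
  rw [← ENNReal.ofReal_pow hr, ← ENNReal.ofReal_pow (Real.sqrt_nonneg _), Real.sq_sqrt pi_nonneg,
    ← ENNReal.ofReal_mul (by positivity)]
  ring_nf

lemma vol_ball2' (x : EuclideanSpace ℝ (Fin 2)) (r : ℝ) (hr : 0 ≤ r) :
    (volume (Metric.ball x r)).toReal = π * r ^ 2 := by
  rw [vol_ball2 x r hr, ENNReal.toReal_ofReal (by positivity)]

lemma vol_closedBall2 (x : EuclideanSpace ℝ (Fin 2)) (r : ℝ) (hr : 0 ≤ r) :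
    (volume (Metric.closedBall x r)) = ENNReal.ofReal (π * r ^ 2) := by
  rw [EuclideanSpace.volume_closedBall, Fintype.card_fin]
  norm_num
  rw [← ENNReal.ofReal_pow hr, ← ENNReal.ofReal_pow (Real.sqrt_nonneg _), Real.sq_sqrt pi_nonneg,
    ← ENNReal.ofReal_mul (by positivity)]
  ring_nf

lemma log_meas (x : EuclideanSpace ℝ (Fin 2)) :
    Measurable (fun y : EuclideanSpace ℝ (Fin 2) => Real.log (dist x y)) :=
  Real.measurable_log.comp (continuous_const.dist continuous_id).measurable

lemma ftc_part (r : ℝ) (hr : 0 < r) :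
    ∫ t in (0:ℝ)..r, t * (-Real.log t) = r ^ 2 / 4 - r ^ 2 * Real.log r / 2 := by
  have hcont : Continuous fun t : ℝ => t * (-Real.log t) := by
    exact (Real.continuous_mul_log).neg.congr (fun t => by simp only [Pi.neg_apply]; ring)
  have hcont2 : ContinuousOn (fun t : ℝ => t ^ 2 / 4 - (t / 2) * (t * Real.log t)) (Icc 0 r) := by
    apply Continuous.continuousOn
    exact ((continuous_pow 2).div_const 4).sub ((continuous_id.div_const 2).mul Real.continuous_mul_log)
  have h := intervalIntegral.integral_eq_sub_of_hasDeriv_right_of_le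
    (f := fun t : ℝ => t ^ 2 / 4 - (t / 2) * (t * Real.log t))
    (f' := fun t : ℝ => t * (-Real.log t)) hr.le
    hcont2 ?_ (hcont.intervalIntegrable _ _)
  · rw [h]; simp; ring
  · intro t ht
    have htne : t ≠ 0 := ht.1.ne'
    have h1 : HasDerivAt (fun t : ℝ => t ^ 2 / 4 - (t / 2) * (t * Real.log t)) (t * (-Real.log t)) t := by
      have := ((hasDerivAt_pow 2 t).div_const 4).sub
        (((hasDerivAt_id t).div_const 2).mul ((hasDerivAt_id t).mul (Real.hasDerivAt_log htne)))
      refine this.congr_deriv ?_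
      simp only [id, Pi.mul_apply]
      field_simp
      ring
    exact h1.hasDerivWithinAt

lemma ball_log_integral (x : EuclideanSpace ℝ (Fin 2)) (r : ℝ) (hr : 0 < r) :
    ∫ y in Metric.ball x r, (-Real.log (dist x y)) = π * r ^ 2 * (1 / 2 - Real.log r) := by
  set g : ℝ → ℝ := Set.indicator (Ico 0 r) (fun t => -Real.log t) with hg
  have step1 : ∫ y in Metric.ball x r, (-Real.log (dist x y)) = ∫ y, g ‖y - x‖ := by
    rw [← integral_indicator measurableSet_ball]
    congr 1
    ext y
    by_cases hy : y ∈ Metric.ball x r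
    · have hd : dist x y = ‖y - x‖ := by rw [dist_comm, dist_eq_norm]
      have hmem : ‖y - x‖ ∈ Ico 0 r := ⟨norm_nonneg _, hd ▸ mem_ball'.mp hy⟩
      rw [Set.indicator_of_mem hy, hg, Set.indicator_of_mem hmem, hd]
    · have hmem : ‖y - x‖ ∉ Ico 0 r := by
        simp only [mem_Ico, not_and, not_lt]
        intro _
        have : ¬ dist y x < r := by rwa [mem_ball] at hy
        rw [dist_eq_norm] at this; linarith
      rw [Set.indicator_of_notMem hy, hg, Set.indicator_of_notMem hmem]
  have step2 : ∫ y : EuclideanSpace ℝ (Fin 2), g ‖y - x‖ = ∫ y : EuclideanSpace ℝ (Fin 2), g ‖y‖ :=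
    integral_sub_right_eq_self (fun y => g ‖y‖) x
  have step3 : ∫ y : EuclideanSpace ℝ (Fin 2), g ‖y‖
      = 2 * (π * ∫ t in Ioi (0:ℝ), t * g t) := by
    rw [integral_fun_norm_addHaar volume g]
    simp only [finrank_euclideanSpace, Fintype.card_fin, vol_ball2' 0 1 zero_le_one, smul_eq_mul,
      nsmul_eq_mul, pow_one]
    norm_num
    left; rw [measureReal_def, vol_ball2' 0 1 zero_le_one]; ring
  have step4 : ∫ t in Ioi (0:ℝ), t * g t = r ^ 2 / 4 - r ^ 2 * Real.log r / 2 := by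
    have : ∀ t : ℝ, t * g t = Set.indicator (Ico 0 r) (fun t => t * (-Real.log t)) t := by
      intro t
      rw [hg]
      by_cases ht : t ∈ Ico 0 r
      · rw [Set.indicator_of_mem ht, Set.indicator_of_mem ht]
      · rw [Set.indicator_of_notMem ht, Set.indicator_of_notMem ht, mul_zero]
    simp_rw [this]
    rw [setIntegral_indicator measurableSet_Ico]
    have hset : Ioi (0:ℝ) ∩ Ico 0 r = Ioo 0 r := by
      ext t; simp only [mem_inter_iff, mem_Ioi, mem_Ico, mem_Ioo]
      constructor
      · rintro ⟨h1, _, h2⟩; exact ⟨h1, h2⟩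
      · rintro ⟨h1, h2⟩; exact ⟨h1, h1.le, h2⟩
    rw [hset, ← integral_Ioc_eq_integral_Ioo, ← intervalIntegral.integral_of_le hr.le,
      ftc_part r hr]
  rw [step1, step2, step3, step4]
  ring

lemma log_integrableOn_ball (x : EuclideanSpace ℝ (Fin 2)) (R : ℝ) :
    IntegrableOn (fun y => Real.log (dist x y)) (Metric.ball x R) volume := by
  rcases le_or_gt R 0 with hR | hR
  · rw [Metric.ball_eq_empty.mpr hR]; exact integrableOn_empty
  set f : EuclideanSpace ℝ (Fin 2) → ℝ := fun y => Real.log (dist x y) with hf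
  set s : ℕ → Set (EuclideanSpace ℝ (Fin 2)) :=
    fun k => Metric.closedBall x (R / 2 ^ k) \ Metric.ball x (R / 2 ^ (k + 1)) with hs
  have hmeas : ∀ k, MeasurableSet (s k) :=
    fun k => measurableSet_closedBall.diff measurableSet_ball
  have hvolR : ∀ k, (volume (s k)).toReal ≤ π * R ^ 2 * (1/4 : ℝ) ^ k := by
    intro k
    have h1 : volume (s k) ≤ volume (Metric.closedBall x (R / 2 ^ k)) :=
      measure_mono diff_subset
    rw [vol_closedBall2 x _ (by positivity)] at h1
    have h4 : ((1:ℝ)/4) ^ k * ((2:ℝ) ^ k) ^ 2 = 1 := by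
      rw [pow_right_comm, show ((2:ℝ)) ^ 2 = 4 by norm_num, ← mul_pow]
      norm_num
    have heq : π * (R / 2 ^ k) ^ 2 = π * R ^ 2 * (1/4) ^ k := by
      have hpow : (R / 2 ^ k) ^ 2 = R ^ 2 / 4 ^ k := by
        rw [div_pow, pow_right_comm]; norm_num
      rw [hpow, one_div, inv_pow, ← div_eq_mul_inv, mul_div_assoc]
    rw [heq] at h1
    calc (volume (s k)).toReal ≤ (ENNReal.ofReal (π * R ^ 2 * (1/4) ^ k)).toReal := by
          exact ENNReal.toReal_mono ENNReal.ofReal_ne_top h1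
      _ = π * R ^ 2 * (1/4) ^ k := ENNReal.toReal_ofReal (by positivity)
  have hvolfin : ∀ k, volume (s k) ≠ ⊤ := by
    intro k
    have h1 : volume (s k) ≤ volume (Metric.closedBall x (R / 2 ^ k)) :=
      measure_mono diff_subset
    exact (lt_of_le_of_lt h1 (Bornology.IsBounded.measure_lt_top isBounded_closedBall)).ne
  have hbd : ∀ k, ∀ y ∈ s k, ‖f y‖ ≤ |Real.log R| + (k + 1) * Real.log 2 := by
    intro k y hy
    simp only [hf]
    have hd1 : dist x y ≤ R / 2 ^ k := by rw [dist_comm]; exact hy.1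
    have hd2 : R / 2 ^ (k + 1) ≤ dist x y := by
      rw [dist_comm]; by_contra hcon; exact hy.2 (mem_ball.mpr (lt_of_not_ge hcon))
    have hdpos : 0 < dist x y := lt_of_lt_of_le (by positivity) hd2
    have hup : Real.log (dist x y) ≤ Real.log R - k * Real.log 2 := by
      calc Real.log (dist x y) ≤ Real.log (R / 2 ^ k) := Real.log_le_log hdpos hd1
        _ = Real.log R - k * Real.log 2 := by
            rw [Real.log_div hR.ne' (by positivity), Real.log_pow]
    have hlo : Real.log R - (k+1) * Real.log 2 ≤ Real.log (dist x y) := by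
      calc Real.log R - (k+1) * Real.log 2 = Real.log (R / 2 ^ (k+1)) := by
            rw [Real.log_div hR.ne' (by positivity), Real.log_pow]; push_cast; ring
        _ ≤ Real.log (dist x y) := Real.log_le_log (by positivity) hd2
    rw [Real.norm_eq_abs, abs_le]
    have hl2 : (0:ℝ) ≤ Real.log 2 := Real.log_nonneg one_le_two
    constructor
    · have := neg_abs_le (Real.log R); nlinarith
    · have := le_abs_self (Real.log R); nlinarith
  have hint : ∀ k, IntegrableOn f (s k) volume := by
    intro k
    exact Measure.integrableOn_of_bounded (hvolfin k) (log_meas x).aestronglyMeasurable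
      (by filter_upwards [ae_restrict_mem (hmeas k)] with y hy using hbd k y hy)
  have hsum : Summable fun k => ∫ y in s k, ‖f y‖ := by
    have hle : ∀ k, ∫ y in s k, ‖f y‖ ≤
        (|Real.log R| + (k + 1) * Real.log 2) * (π * R ^ 2 * (1/4 : ℝ) ^ k) := by
      intro k
      calc ∫ y in s k, ‖f y‖ ≤ ∫ _ in s k, (|Real.log R| + (k + 1) * Real.log 2) := by
            apply setIntegral_mono_on (hint k).norm (integrableOn_const (hvolfin k)) (hmeas k)
            exact hbd k
        _ = (volume (s k)).toReal * (|Real.log R| + (k + 1) * Real.log 2) := by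
            rw [setIntegral_const, smul_eq_mul, measureReal_def]
        _ ≤ (π * R ^ 2 * (1/4 : ℝ) ^ k) * (|Real.log R| + (k + 1) * Real.log 2) := by
            apply mul_le_mul_of_nonneg_right (hvolR k)
            positivity
        _ = (|Real.log R| + (k + 1) * Real.log 2) * (π * R ^ 2 * (1/4 : ℝ) ^ k) := by ring
    apply Summable.of_nonneg_of_le
      (fun k => integral_nonneg fun y => norm_nonneg _) hle
    have h1 : Summable fun k : ℕ => ((1:ℝ)/4) ^ k :=
      summable_geometric_of_lt_one (by norm_num) (by norm_num)
    have h2 : Summable fun k : ℕ => (k : ℝ) * ((1:ℝ)/4) ^ k := by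
      have := summable_pow_mul_geometric_of_norm_lt_one (R := ℝ) 1 (r := 1/4) (by rw [Real.norm_eq_abs, abs_of_pos]; norm_num; norm_num)
      simpa using this
    have := ((h1.mul_left ((|Real.log R| + Real.log 2) * (π * R ^ 2))).add
      (h2.mul_left (Real.log 2 * (π * R ^ 2))))
    apply this.congr
    intro k
    push_cast
    ring
  have hUnion : IntegrableOn f (⋃ k, s k) volume :=
    integrableOn_iUnion_of_summable_integral_norm hint hsum
  have hsub : Metric.ball x R \ {x} ⊆ ⋃ k, s k := by
    intro y hy
    have hdpos : 0 < dist x y := by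
      rw [dist_pos]; exact fun hxy => hy.2 (by simp [hxy.symm])
    have hdlt : dist x y < R := by rw [dist_comm]; exact mem_ball.mp hy.1
    obtain ⟨n, hn⟩ := pow_unbounded_of_one_lt (R / dist x y) (one_lt_two (α := ℝ))
    have hex : ∃ k, R / 2 ^ (k + 1) ≤ dist x y := by
      refine ⟨n, ?_⟩
      rw [div_le_iff₀ (by positivity)]
      rw [div_lt_iff₀ hdpos] at hn
      calc R ≤ 2 ^ n * dist x y := hn.le
        _ = dist x y * 2 ^ n := mul_comm _ _
        _ ≤ dist x y * 2 ^ (n + 1) := by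
            apply mul_le_mul_of_nonneg_left _ hdpos.le
            exact pow_le_pow_right₀ one_le_two (Nat.le_succ n)
    classical
    set k := Nat.find hex with hk
    have hk1 : R / 2 ^ (k + 1) ≤ dist x y := Nat.find_spec hex
    have hk2 : dist x y ≤ R / 2 ^ k := by
      rcases Nat.eq_zero_or_pos k with h0 | h0
      · rw [h0]; simpa using hdlt.le
      · have := Nat.find_min hex (Nat.sub_lt h0 one_pos)
        have hkk : k - 1 + 1 = k := Nat.succ_pred_eq_of_pos h0
        rw [hkk] at this
        exact (lt_of_not_ge this).le
    exact mem_iUnion.mpr ⟨k, ⟨by rwa [mem_closedBall, dist_comm], fun hcon => by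
      rw [mem_ball, dist_comm] at hcon; exact absurd hk1 (not_le.mpr hcon)⟩⟩
  have hx : IntegrableOn f {x} volume := by
    rw [IntegrableOn, Measure.restrict_eq_zero.mpr (measure_singleton x)]
    exact integrable_zero_measure
  have : IntegrableOn f (Metric.ball x R \ {x} ∪ {x}) volume :=
    (hUnion.mono_set hsub).union hx
  exact this.mono_set (by intro y hy; rw [diff_union_self]; exact mem_union_left _ hy)

lemma bathtub (D : Set (EuclideanSpace ℝ (Fin 2))) (hD_meas : MeasurableSet D)
    (hD_bdd : Bornology.IsBounded D)
    (x : EuclideanSpace ℝ (Fin 2)) (r A κ : ℝ) (hr : 0 < r) (hA : 0 < A)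
    (ω : EuclideanSpace ℝ (Fin 2) → ℝ)
    (hω_ae : ∀ᵐ y ∂(volume.restrict D), 0 ≤ ω y ∧ ω y ≤ A)
    (hωD : IntegrableOn ω D volume) (hω_int : ∫ y in D, ω y = κ)
    (hfDω : IntegrableOn (fun y => (-Real.log (dist x y)) * ω y) D volume)
    (hArea : A * (π * r ^ 2) = κ) :
    ∫ y in D, (-Real.log (dist x y)) * ω y
      ≤ A * ∫ y in Metric.ball x r, (-Real.log (dist x y)) := by
  set f : EuclideanSpace ℝ (Fin 2) → ℝ := fun y => -Real.log (dist x y) with hf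
  set B : Set (EuclideanSpace ℝ (Fin 2)) := Metric.ball x r with hB
  set L : ℝ := -Real.log r with hL
  have hfB : IntegrableOn f B volume := (log_integrableOn_ball x r).neg
  have hBmeas : MeasurableSet B := measurableSet_ball
  have hBfin : volume B ≠ ⊤ := (Bornology.IsBounded.measure_lt_top isBounded_ball).ne
  have hvol_inter_fin : volume (D ∩ B) ≠ ⊤ :=
    (lt_of_le_of_lt (measure_mono inter_subset_right) hBfin.lt_top).ne
  have hvol_diff_fin : volume (B \ D) ≠ ⊤ :=
    (lt_of_le_of_lt (measure_mono diff_subset) hBfin.lt_top).ne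
  -- a.e. lower bound for f on B
  have hne : ∀ᵐ y : EuclideanSpace ℝ (Fin 2) ∂volume, y ≠ x := by
    rw [ae_iff]
    simpa only [not_not, setOf_eq_eq_singleton] using measure_singleton x
  have hfge : ∀ y ∈ B, y ≠ x → L ≤ f y := by
    intro y hyB hyx
    have hdpos : 0 < dist x y := dist_pos.mpr (fun hh => hyx hh.symm)
    have hdlt : dist x y < r := by rw [dist_comm]; exact mem_ball.mp hyB
    have := Real.log_le_log hdpos hdlt.le
    simp only [hf, hL]; linarith
  have hfle : ∀ y, y ∉ B → f y ≤ L := by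
    intro y hyB
    have hdge : r ≤ dist x y := by
      rw [dist_comm]; by_contra hcon; exact hyB (mem_ball.mpr (lt_of_not_ge hcon))
    have := Real.log_le_log hr hdge
    simp only [hf, hL]; linarith
  -- abbreviations
  set I1 := ∫ y in D ∩ B, f y * ω y with hI1
  set I2 := ∫ y in D \ B, f y * ω y with hI2
  set W1 := ∫ y in D ∩ B, ω y with hW1
  set W2 := ∫ y in D \ B, ω y with hW2
  set F1 := ∫ y in D ∩ B, f y with hF1
  set FB := ∫ y in B, f y with hFB
  set F2 := ∫ y in B \ D, f y with hF2
  set v1 := (volume (D ∩ B)).toReal with hv1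
  set v2 := (volume (B \ D)).toReal with hv2
  have e1 : ∫ y in D, f y * ω y = I1 + I2 :=
    (integral_inter_add_diff hBmeas hfDω).symm
  have e6 : W1 + W2 = κ := by
    rw [hW1, hW2, integral_inter_add_diff hBmeas hωD, hω_int]
  have hBD_fin : volume (B ∩ D) ≠ ⊤ := by rwa [inter_comm]
  have e7 : v1 + v2 = π * r ^ 2 := by
    have hsum : (volume (B ∩ D)).toReal + (volume (B \ D)).toReal = (volume B).toReal := by
      rw [← ENNReal.toReal_add hBD_fin hvol_diff_fin, measure_inter_add_diff B hD_meas]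
    rw [hv1, hv2, inter_comm D B, hsum, hB]
    exact vol_ball2' x r hr.le
  have e2 : I2 ≤ L * W2 := by
    rw [hI2, hW2, ← integral_const_mul]
    apply integral_mono_ae (hfDω.mono_set diff_subset) ((hωD.mono_set diff_subset).const_mul L)
    filter_upwards [ae_restrict_of_ae_restrict_of_subset diff_subset hω_ae,
      ae_restrict_mem (hD_meas.diff hBmeas)] with y hy1 hy2
    exact mul_le_mul_of_nonneg_right (hfle y hy2.2) hy1.1
  have e3 : I1 ≤ A * F1 + L * (W1 - A * v1) := by
    have hωint : IntegrableOn ω (D ∩ B) volume := hωD.mono_set inter_subset_left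
    have hconst : IntegrableOn (fun _ => A) (D ∩ B) volume :=
      integrableOn_const hvol_inter_fin
    have hsub : IntegrableOn (fun y => ω y - A) (D ∩ B) volume := hωint.sub hconst
    have hAf : IntegrableOn (fun y => A * f y) (D ∩ B) volume :=
      (hfB.mono_set inter_subset_right).const_mul A
    have hLsub : IntegrableOn (fun y => L * (ω y - A)) (D ∩ B) volume := hsub.const_mul L
    have hmono : I1 ≤ ∫ y in D ∩ B, (A * f y + L * (ω y - A)) := by
      apply integral_mono_ae (hfDω.mono_set inter_subset_left) (hAf.add hLsub)
      filter_upwards [ae_restrict_of_ae_restrict_of_subset inter_subset_left hω_ae,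
        ae_restrict_mem (hD_meas.inter hBmeas), ae_restrict_of_ae hne] with y hy1 hy2 hy3
      have h1 : L ≤ f y := hfge y hy2.2 hy3
      have h2 : ω y ≤ A := hy1.2
      show f y * ω y ≤ A * f y + L * (ω y - A)
      nlinarith [mul_nonneg (sub_nonneg.mpr h1) (sub_nonneg.mpr h2)]
    calc I1 ≤ ∫ y in D ∩ B, (A * f y + L * (ω y - A)) := hmono
      _ = A * F1 + L * (W1 - A * v1) := by
          rw [integral_add hAf hLsub, integral_const_mul, integral_const_mul,
            integral_sub hωint hconst, setIntegral_const, smul_eq_mul, measureReal_def, ← hF1, ← hW1, ← hv1]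
          ring
  have e4 : FB = F1 + F2 := by
    rw [hFB, hF1, hF2, inter_comm]
    exact (integral_inter_add_diff hD_meas hfB).symm
  have e5 : L * v2 ≤ F2 := by
    have : ∫ y in B \ D, (L : ℝ) ≤ F2 := by
      apply integral_mono_ae (integrableOn_const (C := L) hvol_diff_fin)
        (hfB.mono_set diff_subset)
      filter_upwards [ae_restrict_mem (hBmeas.diff hD_meas), ae_restrict_of_ae hne] with y hy1 hy2
      exact hfge y hy1.1 hy2
    rwa [setIntegral_const, smul_eq_mul, mul_comm] at this
  -- combine
  have e4A : A * FB = A * F1 + A * F2 := by rw [e4]; ring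
  have e5A : A * (L * v2) ≤ A * F2 := mul_le_mul_of_nonneg_left e5 hA.le
  have e6L : L * W1 + L * W2 = L * κ := by rw [← mul_add, e6]
  have e7AL : L * (A * v1) + L * (A * v2) = L * (A * (π * r ^ 2)) := by
    rw [← mul_add, ← mul_add, e7]
  have e8L : L * (A * (π * r ^ 2)) = L * κ := by rw [hArea]
  rw [e1]
  nlinarith [e2, e3, e4A, e5A, e6L, e7AL, e8L]

end Aux


lemma rem_lemma (κ M C₀ : ℝ) (hκ : 0 < κ) (hC₀ : 0 < C₀) :
    (2*π)⁻¹*κ*(1/2 + (Real.log π - Real.log κ)/2) + M*κ + C₀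
      ≤ C₀ + 1 + |M| * κ + κ * (1 + |Real.log π| + |Real.log κ|) := by
  have hπ : (0:ℝ) < π := pi_pos
  have hinv : (2*π)⁻¹ * (2*π) = 1 := inv_mul_cancel₀ (by positivity)
  have h2π : (0:ℝ) < (2*π)⁻¹ := by positivity
  have h1 : (2*π)⁻¹ ≤ 1 := by nlinarith [pi_gt_three]
  have h5 := le_abs_self (Real.log π)
  have h6 := neg_abs_le (Real.log κ)
  have h7 := abs_nonneg (Real.log π)
  have h8 := abs_nonneg (Real.log κ)
  have hXle : 1/2 + (Real.log π - Real.log κ)/2 ≤ 1 + |Real.log π| + |Real.log κ| := by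
    linarith
  have hMM : M * κ ≤ |M| * κ := mul_le_mul_of_nonneg_right (le_abs_self M) hκ.le
  have hmain : (2*π)⁻¹*κ*(1/2 + (Real.log π - Real.log κ)/2)
      ≤ κ*(1 + |Real.log π| + |Real.log κ|) := by
    rcases le_or_gt (1/2 + (Real.log π - Real.log κ)/2) 0 with hX0 | hX0
    · have hle0 : (2*π)⁻¹*κ*(1/2 + (Real.log π - Real.log κ)/2) ≤ 0 :=
        mul_nonpos_of_nonneg_of_nonpos (by positivity) hX0
      nlinarith
    · calc (2*π)⁻¹*κ*(1/2 + (Real.log π - Real.log κ)/2)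
          ≤ 1*κ*(1/2 + (Real.log π - Real.log κ)/2) := by
            apply mul_le_mul_of_nonneg_right _ hX0.le
            exact mul_le_mul_of_nonneg_right h1 hκ.le
      _ = κ*(1/2 + (Real.log π - Real.log κ)/2) := by ring
      _ ≤ κ*(1 + |Real.log π| + |Real.log κ|) := mul_le_mul_of_nonneg_left hXle hκ.le
  linarith

/-- A priori upper bound for the stream function: if `ψ = 𝒢ω - μ` with
`0 ≤ ω ≤ Λ/ε²`, `∫_D ω = κ` and `μ ≥ (κ/2π) ln(1/ε) - C₀`, then
`ψ(x) ≤ (κ/4π) ln Λ + C` on `D`, with `C` independent of `ε` and `Λ`. -/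
theorem stmt12 (D : Set (EuclideanSpace ℝ (Fin 2)))
    (hD_meas : MeasurableSet D) (hD_bdd : Bornology.IsBounded D)
    (G h : EuclideanSpace ℝ (Fin 2) → EuclideanSpace ℝ (Fin 2) → ℝ)
    (hG : ∀ x ∈ D, ∀ y ∈ D,
      G x y = -(2 * π)⁻¹ * Real.log (dist x y) - h x y)
    (M : ℝ) (hh_bd : ∀ x ∈ D, ∀ y ∈ D, -M ≤ h x y)
    (κ C₀ : ℝ) (hκ : 0 < κ) (hC₀ : 0 < C₀) :
    ∃ C > (0 : ℝ), ∀ ε ∈ Ioo (0 : ℝ) 1, ∀ Λ > (1 : ℝ), ∀ μ : ℝ,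
      ∀ ω : EuclideanSpace ℝ (Fin 2) → ℝ, Measurable ω →
      (∀ᵐ x ∂(volume.restrict D), 0 ≤ ω x ∧ ω x ≤ Λ / ε ^ 2) →
      (∫ x in D, ω x = κ) →
      (κ / (2 * π) * Real.log (1 / ε) - C₀ ≤ μ) →
      ∀ x ∈ D, (∫ y in D, G x y * ω y) - μ ≤ κ / (4 * π) * Real.log Λ + C := by
  have hπ : (0:ℝ) < π := pi_pos
  set C : ℝ := C₀ + 1 + |M| * κ + κ * (1 + |Real.log π| + |Real.log κ|) with hC
  have hCpos : 0 < C := by positivity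
  refine ⟨C, hCpos, ?_⟩
  rintro ε ⟨hε0, hε1⟩ Λ hΛ μ ω hω_meas hω_ae hω_int hμ x hx
  have hΛ0 : (0:ℝ) < Λ := lt_trans one_pos hΛ
  have hlogΛ : 0 ≤ Real.log Λ := Real.log_nonneg hΛ.le
  have hlogε : 0 ≤ -Real.log ε := by nlinarith [Real.log_nonpos hε0.le hε1.le]
  have hμ' : κ / (2*π) * (-Real.log ε) - C₀ ≤ μ := by rwa [one_div, Real.log_inv] at hμ
  by_cases hGint : IntegrableOn (fun y => G x y * ω y) D volume
  case neg =>
    rw [integral_undef hGint]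
    have h1 : 0 ≤ κ/(2*π) * (-Real.log ε) := by positivity
    have h2 : 0 ≤ κ/(4*π) * Real.log Λ := by positivity
    have h3 : 0 ≤ |M| * κ := by positivity
    have h4 : 0 ≤ κ * (1 + |Real.log π| + |Real.log κ|) := by positivity
    rw [hC]; linarith
  case pos =>
    set A := Λ / ε^2 with hA_def
    have hA : 0 < A := by positivity
    set r := ε * Real.sqrt (κ / (π * Λ)) with hr_def
    have hr : 0 < r := by
      apply mul_pos hε0 (Real.sqrt_pos.mpr (by positivity))
    have hr2 : r^2 = ε^2 * (κ / (π*Λ)) := by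
      rw [hr_def, mul_pow, Real.sq_sqrt (by positivity : (0:ℝ) ≤ κ / (π * Λ))]
    have hArea : A * (π * r^2) = κ := by
      rw [hA_def, hr2]; field_simp
    have hlogr : Real.log r = Real.log ε + (Real.log κ - Real.log π - Real.log Λ)/2 := by
      rw [hr_def, Real.log_mul hε0.ne' (Real.sqrt_pos.mpr (by positivity)).ne',
        Real.log_sqrt (by positivity : (0:ℝ) ≤ κ / (π * Λ)),
        Real.log_div hκ.ne' (by positivity : (π * Λ) ≠ 0), Real.log_mul hπ.ne' hΛ0.ne']
      ring
    have hDfin : volume D ≠ ⊤ := hD_bdd.measure_lt_top.ne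
    have hωD : IntegrableOn ω D volume := by
      apply Measure.integrableOn_of_bounded (M := A) hDfin hω_meas.aestronglyMeasurable
      filter_upwards [hω_ae] with y hy
      rw [Real.norm_eq_abs, abs_of_nonneg hy.1]; exact hy.2
    obtain ⟨RD, hRD⟩ := hD_bdd.subset_closedBall x
    have hDsub : D ⊆ Metric.ball x (RD+1) :=
      hRD.trans (Metric.closedBall_subset_ball (lt_add_one RD))
    have hfD : IntegrableOn (fun y => Real.log (dist x y)) D volume :=
      (log_integrableOn_ball x (RD+1)).mono_set hDsub
    have hlogω : IntegrableOn (fun y => Real.log (dist x y) * ω y) D volume := by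
      apply Integrable.mono' (hfD.norm.const_mul A)
        ((log_meas x).mul hω_meas).aestronglyMeasurable
      filter_upwards [hω_ae] with y hy
      rw [Real.norm_eq_abs, Pi.mul_apply, abs_mul, abs_of_nonneg hy.1]
      calc |Real.log (dist x y)| * ω y ≤ |Real.log (dist x y)| * A :=
            mul_le_mul_of_nonneg_left hy.2 (abs_nonneg _)
        _ = A * ‖Real.log (dist x y)‖ := by rw [Real.norm_eq_abs]; ring
    have hfDω : IntegrableOn (fun y => (-Real.log (dist x y)) * ω y) D volume :=
      hlogω.neg.congr (Eventually.of_forall (fun y => by simp only [Pi.neg_apply]; ring))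
    have hhω : IntegrableOn (fun y => h x y * ω y) D volume := by
      have heq : (fun y => (-(2*π)⁻¹) * (Real.log (dist x y) * ω y) - G x y * ω y)
          =ᵐ[volume.restrict D] (fun y => h x y * ω y) := by
        filter_upwards [ae_restrict_mem hD_meas] with y hy
        rw [hG x hx y hy]; ring
      exact ((hlogω.const_mul (-(2*π)⁻¹)).sub hGint).congr heq
    have hsplit : ∫ y in D, G x y * ω y
        = (-(2*π)⁻¹) * (∫ y in D, Real.log (dist x y) * ω y) - ∫ y in D, h x y * ω y := by
      rw [← integral_const_mul, ← integral_sub (hlogω.const_mul _) hhω]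
      apply integral_congr_ae
      filter_upwards [ae_restrict_mem hD_meas] with y hy
      rw [hG x hx y hy]; ring
    have hhω_low : -(M*κ) ≤ ∫ y in D, h x y * ω y := by
      have hmono : ∫ y in D, (-M) * ω y ≤ ∫ y in D, h x y * ω y := by
        apply integral_mono_ae (hωD.const_mul (-M)) hhω
        filter_upwards [hω_ae, ae_restrict_mem hD_meas] with y hy1 hy2
        exact mul_le_mul_of_nonneg_right (hh_bd x hx y hy2) hy1.1
      rwa [integral_const_mul, hω_int, neg_mul] at hmono
    have hkey : ∫ y in D, (-Real.log (dist x y)) * ω y ≤ κ * (1/2 - Real.log r) := by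
      calc ∫ y in D, (-Real.log (dist x y)) * ω y
          ≤ A * ∫ y in Metric.ball x r, (-Real.log (dist x y)) :=
            bathtub D hD_meas hD_bdd x r A κ hr hA ω hω_ae hωD hω_int hfDω hArea
        _ = A * (π * r^2 * (1/2 - Real.log r)) := by rw [ball_log_integral x r hr]
        _ = κ * (1/2 - Real.log r) := by rw [← hArea]; ring
    have hneg : ∫ y in D, Real.log (dist x y) * ω y
        = -(∫ y in D, (-Real.log (dist x y)) * ω y) := by
      rw [← integral_neg]
      exact integral_congr_ae (Eventually.of_forall (fun y => by ring))
    rw [hsplit, hneg]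
    have h2π : (0:ℝ) < (2*π)⁻¹ := by positivity
    have hmono2 : -(2*π)⁻¹ * -(∫ y in D, (-Real.log (dist x y)) * ω y)
        ≤ (2*π)⁻¹ * (κ * (1/2 - Real.log r)) := by
      rw [neg_mul_neg]
      exact mul_le_mul_of_nonneg_left hkey h2π.le
    have hid : (2*π)⁻¹ * (κ*(1/2 - Real.log r)) - κ/(2*π)*(-Real.log ε)
        = κ/(4*π)*Real.log Λ + (2*π)⁻¹*κ*(1/2 + (Real.log π - Real.log κ)/2) := by
      rw [hlogr]; field_simp; ring
    have hrem : (2*π)⁻¹*κ*(1/2 + (Real.log π - Real.log κ)/2) + M*κ + C₀ ≤ C := by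
      rw [hC]; exact rem_lemma κ M C₀ hκ hC₀
    linarith [hμ', hhω_low, hmono2, hid, hrem]
end

section
/- (Elimination of the patch part) Suppose f satisfies (H1)–(H3) with constant δ₁ ∈ (0,1) from (H2)'. Suppose for all ε, Λ the maximizer's stream function satisfies ψ^{ε,Λ} ≤ |1−2δ₁| f⁻¹(Λ) + (κ/4π) ln Λ + C on D, with C independent of ε, Λ, and that ψ^{ε,Λ} ≥ f⁻¹(Λ) a.e. on the patch set {ω^{ε,Λ} = Λ/ε²}. Then there exists Λ₀ (independent of ε) such that for all Λ ≥ Λ₀ and all ε > 0, the patch set {x ∈ D : ω^{ε,Λ}(x) = Λ/ε²} has Lebesgue measure zero. -/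
open Set Filter MeasureTheory Real

/-- Elimination of the patch part: under (H1)–(H3), if the stream functions satisfy
`ψ^{ε,Λ} ≤ |1-2δ₁| f⁻¹(Λ) + (κ/4π) ln Λ + C` on `D` and `ψ^{ε,Λ} ≥ f⁻¹(Λ)` a.e.
on the patch set `{ω^{ε,Λ} = Λ/ε²}`, then for all `Λ` large (independently of `ε`)
the patch set is Lebesgue-null. -/
theorem stmt13 (D : Set (EuclideanSpace ℝ (Fin 2)))
    (hD_meas : MeasurableSet D) (hD_bdd : Bornology.IsBounded D)
    (f g : ℝ → ℝ)
    (hf_cont : Continuous f) (hf_neg : ∀ s ≤ (0 : ℝ), f s = 0)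
    (hf_mono : StrictMonoOn f (Ici 0))
    (hg_neg : ∀ s ≤ (0 : ℝ), g s = 0)
    (hg_left : ∀ s ≥ (0 : ℝ), g (f s) = s)
    (hg_right : ∀ s ≥ (0 : ℝ), f (g s) = s)
    (δ₁ : ℝ) (hδ₁ : δ₁ ∈ Ioo (0 : ℝ) 1)
    (hH2' : ∀ s ≥ (0 : ℝ), (∫ r in (0 : ℝ)..s, g r) ≥ δ₁ * s * g s)
    (hH3 : ∀ τ > (0 : ℝ), Tendsto (fun s => f s * Real.exp (-τ * s)) atTop (nhds 0))
    (κ C : ℝ) (hκ : 0 < κ) (hC : 0 < C)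
    (ω ψ : ℝ → ℝ → EuclideanSpace ℝ (Fin 2) → ℝ)
    (hω_meas : ∀ ε Λ, Measurable (ω ε Λ))
    (hψ_up : ∀ ε > (0 : ℝ), ∀ Λ > (1 : ℝ), ∀ x ∈ D,
      ψ ε Λ x ≤ |1 - 2 * δ₁| * g Λ + κ / (4 * π) * Real.log Λ + C)
    (hpatch : ∀ ε > (0 : ℝ), ∀ Λ > (1 : ℝ),
      ∀ᵐ x ∂(volume.restrict D), ω ε Λ x = Λ / ε ^ 2 → g Λ ≤ ψ ε Λ x) :
    ∃ Λ₀ > (1 : ℝ), ∀ Λ ≥ Λ₀, ∀ ε > (0 : ℝ),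
      volume {x ∈ D | ω ε Λ x = Λ / ε ^ 2} = 0 := by

  -- basic facts about g
  have hf0 : f 0 = 0 := hf_neg 0 le_rfl
  have hg_nonneg : ∀ s ≥ (0 : ℝ), 0 ≤ g s := by
    intro s hs
    by_contra h
    push_neg at h
    have h1 : f (g s) = 0 := hf_neg _ h.le
    have h2 : s = 0 := by rw [← hg_right s hs, h1]
    have h3 : g s = 0 := by rw [h2]; exact hg_neg 0 le_rfl
    linarith
  have hg_mono : ∀ s t, 0 ≤ s → s ≤ t → g s ≤ g t := by
    intro s t hs hst
    by_contra h
    push_neg at h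
    have := hf_mono (hg_nonneg t (hs.trans hst)) (hg_nonneg s hs) h
    rw [hg_right s hs, hg_right t (hs.trans hst)] at this
    linarith
  set c : ℝ := 1 - |1 - 2 * δ₁| with hc_def
  have hc : 0 < c := by
    have : |1 - 2 * δ₁| < 1 := by
      rw [abs_lt]; constructor <;> [linarith [hδ₁.2]; linarith [hδ₁.1]]
    simp only [hc_def]; linarith
  have hπ : (0 : ℝ) < π := Real.pi_pos
  set τ : ℝ := 4 * π * c / κ with hτ_def
  have hτ : 0 < τ := by positivity
  have hev : ∀ᶠ s in atTop, f s * Real.exp (-τ * s) < Real.exp (-(4 * π / κ) * C) :=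
    (hH3 τ hτ).eventually_lt_const (by positivity)
  obtain ⟨S, hS⟩ := eventually_atTop.mp hev
  refine ⟨max (f (max S 0)) 1 + 1, by simp [le_max_right], ?_⟩
  intro Λ hΛ ε hε
  have hΛ1 : (1 : ℝ) < Λ := by
    have := le_max_right (f (max S 0)) 1
    linarith
  have hΛpos : (0 : ℝ) < Λ := by linarith
  have hΛf : f (max S 0) ≤ Λ := by
    have := le_max_left (f (max S 0)) 1
    linarith
  have hfS0 : 0 ≤ f (max S 0) := by
    rcases eq_or_lt_of_le (le_max_right S 0) with h | h
    · rw [← h, hf0]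
    · have := hf_mono (show (0:ℝ) ∈ Ici 0 from Set.self_mem_Ici)
        (show max S 0 ∈ Ici 0 from Set.mem_Ici.mpr (le_max_right S 0)) h
      rw [hf0] at this; exact this.le
  have hgΛS : S ≤ g Λ := by
    have h1 : g (f (max S 0)) ≤ g Λ := hg_mono _ _ hfS0 hΛf
    rw [hg_left _ (le_max_right S 0)] at h1
    exact le_trans (le_max_left S 0) h1
  -- key inequality
  have hkey : f (g Λ) * Real.exp (-τ * g Λ) < Real.exp (-(4 * π / κ) * C) := hS _ hgΛS
  rw [hg_right Λ hΛpos.le] at hkey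
  have hΛexp : Λ < Real.exp (τ * g Λ - (4 * π / κ) * C) := by
    have h2 : Λ * Real.exp (-τ * g Λ) * Real.exp (τ * g Λ) < Real.exp (-(4 * π / κ) * C) * Real.exp (τ * g Λ) :=
      mul_lt_mul_of_pos_right hkey (Real.exp_pos (τ * g Λ))
    rw [mul_assoc, ← Real.exp_add, ← Real.exp_add] at h2
    simp only [neg_mul, neg_add_cancel, Real.exp_zero, mul_one] at h2
    convert h2 using 2
    ring
  have hlog : Real.log Λ < τ * g Λ - (4 * π / κ) * C := by
    have := Real.log_lt_log hΛpos hΛexp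
    rwa [Real.log_exp] at this
  have hmain : |1 - 2 * δ₁| * g Λ + κ / (4 * π) * Real.log Λ + C < g Λ := by
    have h3 : κ / (4 * π) * Real.log Λ < κ / (4 * π) * (τ * g Λ - (4 * π / κ) * C) :=
      mul_lt_mul_of_pos_left hlog (by positivity)
    have h4 : κ / (4 * π) * (τ * g Λ - (4 * π / κ) * C) = c * g Λ - C := by
      rw [hτ_def]; field_simp
    rw [h4] at h3
    simp only [hc_def] at h3
    nlinarith
  -- conclude
  have hmeasset : MeasurableSet {x | ω ε Λ x = Λ / ε ^ 2} :=
    hω_meas ε Λ (measurableSet_singleton (Λ / ε ^ 2))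
  have hae : ∀ᵐ x ∂(volume.restrict D), ¬ (ω ε Λ x = Λ / ε ^ 2) := by
    filter_upwards [hpatch ε hε Λ hΛ1, ae_restrict_mem hD_meas] with x hx hxD
    intro hpx
    have h1 := hx hpx
    have h2 := hψ_up ε hε Λ hΛ1 x hxD
    linarith
  have : (volume.restrict D) {x | ω ε Λ x = Λ / ε ^ 2} = 0 := by
    rw [ae_iff] at hae
    simpa using hae
  rw [Measure.restrict_apply hmeasset] at this
  have hseteq : {x ∈ D | ω ε Λ x = Λ / ε ^ 2} = {x | ω ε Λ x = Λ / ε ^ 2} ∩ D := by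
    ext x; simp [and_comm]
  rw [hseteq]
  exact this
end
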